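/- arXiv:2001.11183 — 5 statements merged into one kernel-verified Lean document; each statement's English description precedes it below -/
import Mathlib

section
/- Let g: ℝ → ℝ be a nondecreasing left-continuous function with associated Lebesgue–Stieltjes measure μ_g, and let f: [0,T] → ℝ be μ_g-integrable. Define F(t) = ∫_{[0,t)} f dμ_g for t ∈ [0,T]. Then there exists a μ_g-measurable set N ⊆ [0,T] with μ_g(N) = 0 such that for all t ∈ [0,T] \ N, the g-derivative F'_g(t) exists and equals f(t). -/
open MeasureTheory Filter Set

/-- The set of discontinuity points of `g` (where `g` jumps). -/
def DSet (g : ℝ → ℝ) : Set ℝ := {t | g t < Function.rightLim g t}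

/-- `F` has `g`-derivative `L` at `t` (relative to the set `A`): the usual Stieltjes
difference quotient limit at continuity points of `g`, and the jump quotient at
discontinuity points of `g`. -/
def HasDerivG {V : Type*} [NormedAddCommGroup V] [NormedSpace ℝ V]
    (g : ℝ → ℝ) (A : Set ℝ) (F : ℝ → V) (t : ℝ) (L : V) : Prop :=
  if g t < Function.rightLim g t then
    ∃ Fp : V, Filter.Tendsto F (nhdsWithin t (A ∩ Set.Ioi t)) (nhds Fp) ∧
      L = (Function.rightLim g t - g t)⁻¹ • (Fp - F t)
  else
    Filter.Tendsto (fun s => (g s - g t)⁻¹ • (F s - F t)) (nhdsWithin t (A \ {t})) (nhds L)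

section Auxiliary
open Function
open scoped ENNReal NNReal Topology

section aux
variable {g : ℝ → ℝ} (hg : Monotone g)

lemma seq_tendsto_right (t : ℝ) :
    Tendsto (fun n : ℕ => t + 1/(n+1)) atTop (nhdsWithin t (Set.Ioi t)) := by
  rw [tendsto_nhdsWithin_iff]
  constructor
  · have : Tendsto (fun n : ℕ => 1/((n:ℝ)+1)) atTop (nhds 0) :=
      tendsto_one_div_add_atTop_nhds_zero_nat
    simpa using tendsto_const_nhds.add this
  · filter_upwards with n
    have : (0:ℝ) < 1/((n:ℝ)+1) := by positivity
    simpa using this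

include hg in
lemma measure_singleton_eq (μ : Measure ℝ)
    (hμ : ∀ a b : ℝ, a ≤ b → μ (Set.Ico a b) = ENNReal.ofReal (g b - g a)) (t : ℝ) :
    μ {t} = ENNReal.ofReal (Function.rightLim g t - g t) := by
  set s : ℕ → Set ℝ := fun n => Set.Ico t (t + 1/(n+1)) with hs
  have hmeas : Tendsto (fun n => μ (s n)) atTop (nhds (μ (⋂ n, s n))) := by
    apply tendsto_measure_iInter_atTop (fun n => (measurableSet_Ico).nullMeasurableSet)
    · intro n m hnm
      apply Set.Ico_subset_Ico le_rfl
      have hc : (n:ℝ) ≤ m := Nat.cast_le.2 hnm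
      have : (1:ℝ)/(m+1) ≤ 1/(n+1) := by
        apply one_div_le_one_div_of_le (by positivity)
        linarith
      linarith
    · refine ⟨0, ?_⟩
      rw [hμ t _ (by norm_num : t ≤ t + 1/((0:ℕ)+1))]
      exact ENNReal.ofReal_ne_top
  have hint : (⋂ n, s n) = {t} := by
    ext x
    simp only [Set.mem_iInter, hs, Set.mem_Ico, Set.mem_singleton_iff]
    constructor
    · intro h
      have h0 := h 0
      rcases lt_or_eq_of_le h0.1 with h' | h'
      · exfalso
        obtain ⟨n, hn⟩ := exists_nat_one_div_lt (sub_pos.2 h' : (0:ℝ) < x - t)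
        have := (h n).2
        linarith [hn]
      · exact h'.symm
    · rintro rfl
      intro n
      refine ⟨le_rfl, ?_⟩
      have : (0:ℝ) < 1/((n:ℝ)+1) := by positivity
      linarith
  rw [hint] at hmeas
  have hval : Tendsto (fun n => μ (s n)) atTop
      (nhds (ENNReal.ofReal (Function.rightLim g t - g t))) := by
    have h1 : Tendsto (fun n : ℕ => g (t + 1/(n+1))) atTop (nhds (Function.rightLim g t)) :=
      (hg.tendsto_rightLim t).comp (seq_tendsto_right t)
    have h2 : Tendsto (fun n : ℕ => ENNReal.ofReal (g (t + 1/(n+1)) - g t)) atTop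
        (nhds (ENNReal.ofReal (Function.rightLim g t - g t))) :=
      (ENNReal.continuous_ofReal.tendsto _).comp (h1.sub tendsto_const_nhds)
    apply h2.congr
    intro n
    have : (0:ℝ) < 1/((n:ℝ)+1) := by positivity
    rw [hμ t _ (by linarith)]
  exact tendsto_nhds_unique hmeas hval

end aux


noncomputable def hh (g : ℝ → ℝ) (T : ℝ) : ℝ → ℝ :=
  fun y => sInf (({u | y < g u} ∩ Icc 0 T) ∪ {T})

section hhsec
variable {g : ℝ → ℝ} {T : ℝ} (hg : Monotone g) (hT : 0 ≤ T)
  (hlc : ∀ t : ℝ, ContinuousWithinAt g (Set.Iio t) t)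

lemma hh_S_nonempty (y : ℝ) : (({u | y < g u} ∩ Icc 0 T) ∪ {T} : Set ℝ).Nonempty :=
  ⟨T, Or.inr rfl⟩

include hT in
lemma hh_S_bdd (y : ℝ) : BddBelow (({u | y < g u} ∩ Icc 0 T) ∪ {T} : Set ℝ) := by
  refine ⟨0, fun u hu => ?_⟩
  rcases hu with hu | hu
  · exact hu.2.1
  · rw [Set.mem_singleton_iff] at hu; rw [hu]; exact hT

include hT in
lemma hh_mem (y : ℝ) : hh g T y ∈ Icc 0 T := by
  constructor
  · apply le_csInf (hh_S_nonempty y)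
    intro u hu
    rcases hu with hu | hu
    · exact hu.2.1
    · rw [Set.mem_singleton_iff] at hu; rw [hu]; exact hT
  · exact csInf_le (hh_S_bdd hT y) (Or.inr rfl)

include hT in
lemma hh_mono : Monotone (hh g T) := by
  intro y1 y2 h12
  apply csInf_le_csInf (hh_S_bdd hT y1) (hh_S_nonempty y2)
  intro u hu
  rcases hu with hu | hu
  · exact Or.inl ⟨lt_of_le_of_lt h12 hu.1, hu.2⟩
  · exact Or.inr hu

include hg hT hlc in
lemma hh_lt_iff {y : ℝ} (hy : y ∈ Ico (g 0) (g T)) (a : ℝ) :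
    hh g T y < a ↔ y < g a := by
  constructor
  · intro h
    obtain ⟨u, hu, hua⟩ := exists_lt_of_csInf_lt (hh_S_nonempty y) h
    rcases hu with hu | hu
    · exact lt_of_lt_of_le hu.1 (hg hua.le)
    · rw [Set.mem_singleton_iff] at hu
      subst hu
      exact lt_of_lt_of_le hy.2 (hg hua.le)
  · intro h
    rcases le_or_gt a T with haT | haT
    · -- use left continuity to find u < a with g u > y, 0 < u
      have h0a : 0 < a := by
        by_contra h0
        push_neg at h0
        exact absurd (lt_of_le_of_lt hy.1 h) (not_lt.2 (hg h0))
      have h1 : ∀ᶠ u in nhdsWithin a (Iio a), y < g u :=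
        (hlc a).eventually (eventually_gt_nhds h)
      have h2 : Ioo 0 a ∈ nhdsWithin a (Iio a) :=
        Ioo_mem_nhdsLT_of_mem ⟨h0a, le_rfl⟩
      obtain ⟨u, hyu, hu⟩ := (h1.and (eventually_mem_set.2 h2)).exists
      have : u ∈ ({u | y < g u} ∩ Icc 0 T) ∪ {T} :=
        Or.inl ⟨hyu, hu.1.le, hu.2.le.trans haT⟩
      exact lt_of_le_of_lt (csInf_le (hh_S_bdd hT y) this) hu.2
    · exact lt_of_le_of_lt (hh_mem hT y).2 haT

include hg hT hlc in
lemma hh_eq_self {t : ℝ} (ht : t ∈ Ico 0 T) (hstrict : ∀ s, t < s → g t < g s) :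
    hh g T (g t) = t := by
  have hy : g t ∈ Ico (g 0) (g T) := ⟨hg ht.1, hstrict T ht.2⟩
  have hle : hh g T (g t) ≤ t := by
    by_contra hlt
    push_neg at hlt
    exact lt_irrefl _ ((hh_lt_iff hg hT hlc hy (hh g T (g t))).2
      (hstrict _ hlt) |>.trans_le le_rfl)
  have hge : ¬ hh g T (g t) < t := by
    intro hlt
    exact lt_irrefl _ ((hh_lt_iff hg hT hlc hy t).1 hlt)
  exact le_antisymm hle (not_lt.1 hge)

include hg hT hlc in
lemma g_hh_le {y : ℝ} (hy : y ∈ Ico (g 0) (g T)) : g (hh g T y) ≤ y := by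
  by_contra h
  push_neg at h
  exact lt_irrefl _ ((hh_lt_iff hg hT hlc hy (hh g T y)).2 h)

include hg hT hlc in
lemma le_rightLim_hh {y : ℝ} (hy : y ∈ Ico (g 0) (g T)) :
    y ≤ Function.rightLim g (hh g T y) := by
  apply ge_of_tendsto (hg.tendsto_rightLim (hh g T y))
  filter_upwards [self_mem_nhdsWithin] with s hs
  exact ((hh_lt_iff hg hT hlc hy s).1 hs).le

include hg hT hlc in
lemma hh_preimage_Ico (a b : ℝ) :
    (hh g T) ⁻¹' (Ico a b) ∩ Ico (g 0) (g T) = Ico (g 0) (g T) ∩ Ico (g a) (g b) := by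
  ext y
  simp only [Set.mem_inter_iff, Set.mem_preimage, Set.mem_Ico]
  constructor
  · rintro ⟨⟨hay, hyb⟩, hyI⟩
    refine ⟨hyI, ?_, (hh_lt_iff hg hT hlc hyI b).1 hyb⟩
    by_contra h
    push_neg at h
    exact absurd ((hh_lt_iff hg hT hlc hyI a).2 h) (not_lt.2 hay)
  · rintro ⟨hyI, hga, hgb⟩
    refine ⟨⟨?_, (hh_lt_iff hg hT hlc hyI b).2 hgb⟩, hyI⟩
    by_contra h
    push_neg at h
    exact absurd ((hh_lt_iff hg hT hlc hyI a).1 h) (not_lt.2 hga)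

end hhsec



section msec
variable {g : ℝ → ℝ} {T : ℝ} (hg : Monotone g) (hT : 0 ≤ T)
  (hlc : ∀ t : ℝ, ContinuousWithinAt g (Set.Iio t) t)
  {μ : Measure ℝ} (hμ : ∀ a b : ℝ, a ≤ b → μ (Set.Ico a b) = ENNReal.ofReal (g b - g a))

-- placeholders for s2 lemmas
variable (hh_mono' : Monotone (hh g T))
  (hh_pre : ∀ a b : ℝ, (hh g T) ⁻¹' (Ico a b) ∩ Ico (g 0) (g T)
      = Ico (g 0) (g T) ∩ Ico (g a) (g b))

include hg hμ hh_mono' hh_pre hT in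
lemma measure_restrict_eq_map' :
    μ.restrict (Ico 0 T) = Measure.map (hh g T) (volume.restrict (Ico (g 0) (g T))) := by
  apply Measure.ext_of_Ico'
  · intro a b _
    rw [Measure.restrict_apply measurableSet_Ico, Set.Ico_inter_Ico]
    rcases le_or_gt (max a 0) (min b T) with h | h
    · rw [hμ _ _ h]; exact ENNReal.ofReal_ne_top
    · rw [Set.Ico_eq_empty (fun hcon => absurd hcon.le (not_le.2 h)), measure_empty]; exact ENNReal.zero_ne_top
  · intro a b hab
    rw [Measure.restrict_apply measurableSet_Ico, Set.Ico_inter_Ico,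
      Measure.map_apply hh_mono'.measurable measurableSet_Ico,
      Measure.restrict_apply (hh_mono'.measurable measurableSet_Ico),
      hh_pre a b, Set.Ico_inter_Ico, Real.volume_Ico,
      ← hg.map_max, ← hg.map_min]
    rcases le_or_gt (max a 0) (min b T) with h | h
    · rw [hμ _ _ h, max_comm, min_comm]
    · have hmm : min (g T) (g b) ≤ max (g 0) (g a) := by
        rw [← hg.map_max, ← hg.map_min]
        exact hg (le_of_lt (by rw [max_comm a 0, min_comm b T] at h; exact h))
      rw [Set.Ico_eq_empty (fun hcon => absurd hcon.le (not_le.2 h)), measure_empty]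
      symm
      rw [← hg.map_max, ← hg.map_min] at hmm
      rw [ENNReal.ofReal_eq_zero, sub_nonpos]
      exact hmm
end msec

section isec
variable {g : ℝ → ℝ} {T : ℝ} (hg : Monotone g) (hT : 0 ≤ T)
  {μ : Measure ℝ}
  (hh_mono' : Monotone (hh g T))
  (hh_pre : ∀ a b : ℝ, (hh g T) ⁻¹' (Ico a b) ∩ Ico (g 0) (g T)
      = Ico (g 0) (g T) ∩ Ico (g a) (g b))
  (hmap : μ.restrict (Ico 0 T) = Measure.map (hh g T) (volume.restrict (Ico (g 0) (g T))))

include hg hh_mono' hh_pre hmap in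
lemma restrict_Ico_eq_map {t s : ℝ} (ht : 0 ≤ t) (hts : t ≤ s) (hsT : s ≤ T) :
    μ.restrict (Ico t s) = Measure.map (hh g T) (volume.restrict (Ico (g t) (g s))) := by
  have hsub : Ico t s ⊆ Ico 0 T := Set.Ico_subset_Ico ht hsT
  rw [← Measure.restrict_restrict_of_subset hsub, hmap,
    Measure.restrict_map hh_mono'.measurable measurableSet_Ico,
    Measure.restrict_restrict (hh_mono'.measurable measurableSet_Ico)]
  congr 1
  rw [hh_pre t s]
  congr 1
  apply Set.inter_eq_self_of_subset_right
  intro y hy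
  exact ⟨le_trans (hg ht) hy.1, lt_of_lt_of_le hy.2 (hg hsT)⟩

include hg hh_mono' hh_pre hmap in
lemma integral_Ico_transfer {f : ℝ → ℝ} (hf : IntegrableOn f (Set.Icc 0 T) μ)
    {t s : ℝ} (ht : 0 ≤ t) (hts : t ≤ s) (hsT : s ≤ T) :
    ∫ x in Ico t s, f x ∂μ = ∫ y in Ico (g t) (g s), f (hh g T y) := by
  have hrm := restrict_Ico_eq_map hg hh_mono' hh_pre hmap ht hts hsT
  have hfm : AEStronglyMeasurable f (μ.restrict (Ico t s)) :=
    hf.1.mono_measure (Measure.restrict_mono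
      ((Set.Ico_subset_Ico ht hsT).trans Set.Ico_subset_Icc_self) le_rfl)
  rw [show (∫ x in Ico t s, f x ∂μ) = ∫ x, f x ∂(μ.restrict (Ico t s)) from rfl, hrm,
    integral_map hh_mono'.measurable.aemeasurable]
  rw [← hrm]
  exact hfm
end isec


section jump
variable {g : ℝ → ℝ} {T : ℝ} (hg : Monotone g) (hT : 0 ≤ T)
  {μ : Measure ℝ} (hμ : ∀ a b : ℝ, a ≤ b → μ (Set.Ico a b) = ENNReal.ofReal (g b - g a))
  {f : ℝ → ℝ} (hf : IntegrableOn f (Set.Icc 0 T) μ)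
  {F : ℝ → ℝ} (hF : ∀ t ∈ Set.Icc 0 T, F t = ∫ s in Set.Ico 0 t, f s ∂μ)

include hf hF in
lemma F_diff {t s : ℝ} (ht : 0 ≤ t) (hts : t ≤ s) (hsT : s ≤ T) :
    F s - F t = ∫ x in Ico t s, f x ∂μ := by
  rw [hF s ⟨le_trans ht hts, hsT⟩, hF t ⟨ht, le_trans hts hsT⟩,
    ← Set.Ico_union_Ico_eq_Ico ht hts,
    setIntegral_union Set.Ico_disjoint_Ico_same measurableSet_Ico
      (hf.mono_set (Set.Ico_subset_Icc_self.trans (Set.Icc_subset_Icc le_rfl (hts.trans hsT))))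
      (hf.mono_set (Set.Ico_subset_Icc_self.trans (Set.Icc_subset_Icc ht hsT)))]
  ring

include hf in
lemma tendsto_Ioo_integral {t : ℝ} (htT : t ∈ Icc 0 T) :
    Tendsto (fun s => ∫ x in Ioo t s, f x ∂μ) (nhdsWithin t (Icc 0 T ∩ Ioi t)) (nhds 0) := by
  classical
  set f' := hf.1.mk f with hf'
  have hff' : f =ᵐ[μ.restrict (Icc 0 T)] f' := hf.1.ae_eq_mk
  have hf'int : IntegrableOn f' (Icc 0 T) μ := hf.congr hff'
  set ρ := (μ.restrict (Icc 0 T)).withDensity (fun x => (‖f' x‖₊ : ℝ≥0∞)) with hρ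
  have hρfin : ρ univ ≠ ⊤ := by
    rw [hρ, withDensity_apply _ MeasurableSet.univ, Measure.restrict_univ]
    exact hf'int.2.ne
  have hempty : (⋂ n : ℕ, Ioo t (t + 1/(n+1))) = ∅ := by
    ext x
    simp only [Set.mem_iInter, Set.mem_Ioo, Set.mem_empty_iff_false, iff_false, not_forall]
    by_contra hcon
    push_neg at hcon
    obtain ⟨n, hn⟩ := exists_nat_one_div_lt (sub_pos.2 (hcon 0).1)
    exact absurd ((hcon n).2) (by push_neg; linarith [hn])
  have hanti : Antitone (fun n : ℕ => Ioo t (t + 1/(n+1))) := by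
    intro n m hnm
    apply Set.Ioo_subset_Ioo le_rfl
    have hc : (n:ℝ) ≤ m := Nat.cast_le.2 hnm
    have : (1:ℝ)/(m+1) ≤ 1/(n+1) := by
      apply one_div_le_one_div_of_le (by positivity)
      linarith
    linarith
  have hseq : Tendsto (fun n : ℕ => ρ (Ioo t (t + 1/(n+1)))) atTop (nhds 0) := by
    have := tendsto_measure_iInter_atTop (μ := ρ) (s := fun n : ℕ => Ioo t (t+1/(n+1)))
      (fun n => measurableSet_Ioo.nullMeasurableSet) hanti
      ⟨0, ne_top_of_le_ne_top hρfin (measure_mono (Set.subset_univ _))⟩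
    rw [hempty, measure_empty] at this
    exact this
  have hmain : Tendsto (fun s => ρ (Ioo t s)) (nhdsWithin t (Icc 0 T ∩ Ioi t)) (nhds 0) := by
    rw [ENNReal.tendsto_nhds_zero]
    intro ε hε
    obtain ⟨n, hn⟩ := (hseq.eventually_lt_const hε).exists
    have hlt : t < t + 1/(n+1) := by
      have : (0:ℝ) < 1/((n:ℝ)+1) := by positivity
      linarith
    filter_upwards [nhdsWithin_le_nhds (Iio_mem_nhds hlt)] with s hs
    exact le_trans (measure_mono (Set.Ioo_subset_Ioo le_rfl (le_of_lt hs))) hn.le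
  have hmainR : Tendsto (fun s => (ρ (Ioo t s)).toReal) (nhdsWithin t (Icc 0 T ∩ Ioi t))
      (nhds 0) := by
    have := (ENNReal.tendsto_toReal (by simp : (0:ℝ≥0∞) ≠ ⊤)).comp hmain
    simpa [Function.comp_def] using this
  apply squeeze_zero_norm' _ hmainR
  filter_upwards [self_mem_nhdsWithin] with s hs
  have hsub : Ioo t s ⊆ Icc 0 T := fun x hx => ⟨le_trans htT.1 hx.1.le, hx.2.le.trans hs.1.2⟩
  have h1 : ∫ x in Ioo t s, f x ∂μ = ∫ x in Ioo t s, f' x ∂μ := by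
    apply integral_congr_ae
    have : μ.restrict (Ioo t s) = (μ.restrict (Icc 0 T)).restrict (Ioo t s) := by
      rw [Measure.restrict_restrict measurableSet_Ioo, Set.inter_eq_self_of_subset_left hsub]
    rw [this]
    exact ae_restrict_of_ae hff'
  rw [h1]
  calc ‖∫ x in Ioo t s, f' x ∂μ‖
      ≤ (∫⁻ x in Ioo t s, ‖f' x‖₊ ∂μ).toReal := by
        have h2 := norm_integral_le_lintegral_norm (μ := μ.restrict (Ioo t s)) f'
        have h3 : ∀ x, ENNReal.ofReal ‖f' x‖ = (‖f' x‖₊ : ℝ≥0∞) := fun x => ofReal_norm_eq_enorm _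
        simp only [h3] at h2
        simpa using h2
    _ = (ρ (Ioo t s)).toReal := by
        rw [hρ, withDensity_apply _ measurableSet_Ioo,
          Measure.restrict_restrict measurableSet_Ioo,
          Set.inter_eq_self_of_subset_left hsub]
end jump


section jump2
variable {g : ℝ → ℝ} {T : ℝ} (hg : Monotone g) (hT : 0 ≤ T)
  {μ : Measure ℝ} (hμ : ∀ a b : ℝ, a ≤ b → μ (Set.Ico a b) = ENNReal.ofReal (g b - g a))
  {f : ℝ → ℝ} (hf : IntegrableOn f (Set.Icc 0 T) μ)
  {F : ℝ → ℝ} (hF : ∀ t ∈ Set.Icc 0 T, F t = ∫ s in Set.Ico 0 t, f s ∂μ)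
  (F_diff' : ∀ {t s : ℝ}, 0 ≤ t → t ≤ s → s ≤ T → F s - F t = ∫ x in Ico t s, f x ∂μ)
  (tio : ∀ {t : ℝ}, t ∈ Icc 0 T →
    Tendsto (fun s => ∫ x in Ioo t s, f x ∂μ) (nhdsWithin t (Icc 0 T ∩ Ioi t)) (nhds 0))
  (msing : ∀ t : ℝ, μ {t} = ENNReal.ofReal (Function.rightLim g t - g t))

include hg hμ hf F_diff' tio msing in
lemma jump_case {t : ℝ} (ht : t ∈ Icc 0 T) (hjump : g t < Function.rightLim g t) :
    ∃ Fp : ℝ, Tendsto F (nhdsWithin t (Icc 0 T ∩ Ioi t)) (nhds Fp) ∧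
      f t = (Function.rightLim g t - g t)⁻¹ • (Fp - F t) := by
  set j := Function.rightLim g t - g t with hj
  have hjpos : 0 < j := by simp [hj]; linarith
  refine ⟨F t + j * f t, ?_, ?_⟩
  · have hsing : (μ {t}).toReal = j := by
      rw [msing t, ENNReal.toReal_ofReal hjpos.le]
    have hbase : Tendsto (fun s => F t + j * f t + ∫ x in Ioo t s, f x ∂μ)
        (nhdsWithin t (Icc 0 T ∩ Ioi t)) (nhds (F t + j * f t)) := by
      have := (tendsto_const_nhds (x := F t + j * f t)
        (f := nhdsWithin t (Icc 0 T ∩ Ioi t))).add (tio ht)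
      simpa using this
    apply hbase.congr'
    filter_upwards [self_mem_nhdsWithin] with s hs
    have hts : t < s := hs.2
    have hsT : s ≤ T := hs.1.2
    have h1 : F s - F t = ∫ x in Ico t s, f x ∂μ := F_diff' ht.1 hts.le hsT
    have hsing_sub : ({t} : Set ℝ) ⊆ Icc 0 T := by
      intro x hx
      rw [Set.mem_singleton_iff] at hx
      subst hx
      exact ht
    have hIoo_sub : Ioo t s ⊆ Icc 0 T := fun x hx => ⟨le_trans ht.1 hx.1.le, hx.2.le.trans hsT⟩
    have h2 : ∫ x in Ico t s, f x ∂μ = (∫ x in {t}, f x ∂μ) + ∫ x in Ioo t s, f x ∂μ := by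
      rw [← setIntegral_union (by simp) measurableSet_Ioo
        (hf.mono_set hsing_sub) (hf.mono_set hIoo_sub)]
      rw [Set.singleton_union, Set.Ioo_insert_left hts]
    have h3 : ∫ x in {t}, f x ∂μ = j * f t := by
      rw [integral_singleton, measureReal_def, hsing]; simp
    have : F s = F t + (j * f t + ∫ x in Ioo t s, f x ∂μ) := by
      rw [← h3, ← h2, ← h1]; ring
    rw [this]; ring
  · rw [smul_eq_mul]
    field_simp
    ring
end jump2


lemma goodY_ae {φ : ℝ → ℝ} (hφ : Integrable φ volume) :
    ∀ᵐ y, Tendsto (fun b => ⨍ z in Icc y b, ‖φ z - φ y‖) (nhdsWithin y (Ioi y)) (nhds 0)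
        ∧ Tendsto (fun b => ⨍ z in Icc b y, ‖φ z - φ y‖) (nhdsWithin y (Iio y)) (nhds 0) := by
  filter_upwards [(IsUnifLocDoublingMeasure.vitaliFamily (volume : Measure ℝ)
    1).ae_tendsto_average_norm_sub hφ.locallyIntegrable] with y hy
  exact ⟨hy.comp (Real.tendsto_Icc_vitaliFamily_right y),
    hy.comp (Real.tendsto_Icc_vitaliFamily_left y)⟩

lemma avg_quotient_right {φ : ℝ → ℝ} (hφ : Integrable φ volume) {y : ℝ}
    (hy : Tendsto (fun b => ⨍ z in Icc y b, ‖φ z - φ y‖) (nhdsWithin y (Ioi y)) (nhds 0)) :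
    Tendsto (fun b => (b - y)⁻¹ * ∫ z in Ico y b, φ z) (nhdsWithin y (Ioi y)) (nhds (φ y)) := by
  rw [tendsto_iff_norm_sub_tendsto_zero]
  apply squeeze_zero' (by filter_upwards with b using norm_nonneg _) _ hy
  filter_upwards [self_mem_nhdsWithin] with b hb
  have hyb : y < b := hb
  have hIcoInt : IntegrableOn φ (Ico y b) volume := hφ.integrableOn
  have hconst : IntegrableOn (fun _ : ℝ => φ y) (Ico y b) volume :=
    integrableOn_const (by rw [Real.volume_Ico]; exact ENNReal.ofReal_ne_top)
  have key : (b - y)⁻¹ * (∫ z in Ico y b, φ z) - φ y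
      = (b - y)⁻¹ * ∫ z in Ico y b, (φ z - φ y) := by
    rw [integral_sub hIcoInt hconst, setIntegral_const,
      Real.volume_real_Ico_of_le (by linarith), smul_eq_mul]
    have hne : b - y ≠ 0 := by linarith
    field_simp
  rw [key]
  have h1 : ‖(b - y)⁻¹ * ∫ z in Ico y b, (φ z - φ y)‖
      ≤ (b - y)⁻¹ * ∫ z in Ico y b, ‖φ z - φ y‖ := by
    rw [norm_mul, norm_inv]
    apply mul_le_mul _ (norm_integral_le_integral_norm _) (norm_nonneg _) _
    · rw [Real.norm_eq_abs, abs_of_pos (by linarith : (0:ℝ) < b - y)]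
    · rw [inv_nonneg]; linarith
  apply le_trans h1
  have h2 : ∫ z in Ico y b, ‖φ z - φ y‖ ≤ ∫ z in Icc y b, ‖φ z - φ y‖ := by
    have hint : IntegrableOn (fun z => ‖φ z - φ y‖) (Icc y b) volume := by
      apply Integrable.norm
      exact hφ.integrableOn.sub (integrableOn_const
        (by rw [Real.volume_Icc]; exact ENNReal.ofReal_ne_top))
    apply setIntegral_mono_set hint
      (by filter_upwards with z using norm_nonneg _)
      Set.Ico_subset_Icc_self.eventuallyLE
  have h3 : ⨍ z in Icc y b, ‖φ z - φ y‖
      = (b - y)⁻¹ * ∫ z in Icc y b, ‖φ z - φ y‖ := by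
    rw [setAverage_eq, Real.volume_real_Icc_of_le (by linarith), smul_eq_mul]
  rw [h3]
  apply mul_le_mul_of_nonneg_left h2
  rw [inv_nonneg]; linarith

lemma avg_quotient_left {φ : ℝ → ℝ} (hφ : Integrable φ volume) {y : ℝ}
    (hy : Tendsto (fun b => ⨍ z in Icc b y, ‖φ z - φ y‖) (nhdsWithin y (Iio y)) (nhds 0)) :
    Tendsto (fun b => (y - b)⁻¹ * ∫ z in Ico b y, φ z) (nhdsWithin y (Iio y)) (nhds (φ y)) := by
  rw [tendsto_iff_norm_sub_tendsto_zero]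
  apply squeeze_zero' (by filter_upwards with b using norm_nonneg _) _ hy
  filter_upwards [self_mem_nhdsWithin] with b hb
  have hyb : b < y := hb
  have hIcoInt : IntegrableOn φ (Ico b y) volume := hφ.integrableOn
  have hconst : IntegrableOn (fun _ : ℝ => φ y) (Ico b y) volume :=
    integrableOn_const (by rw [Real.volume_Ico]; exact ENNReal.ofReal_ne_top)
  have key : (y - b)⁻¹ * (∫ z in Ico b y, φ z) - φ y
      = (y - b)⁻¹ * ∫ z in Ico b y, (φ z - φ y) := by
    rw [integral_sub hIcoInt hconst, setIntegral_const,
      Real.volume_real_Ico_of_le (by linarith), smul_eq_mul]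
    have hne : y - b ≠ 0 := by linarith
    field_simp
  rw [key]
  have h1 : ‖(y - b)⁻¹ * ∫ z in Ico b y, (φ z - φ y)‖
      ≤ (y - b)⁻¹ * ∫ z in Ico b y, ‖φ z - φ y‖ := by
    rw [norm_mul, norm_inv]
    apply mul_le_mul _ (norm_integral_le_integral_norm _) (norm_nonneg _) _
    · rw [Real.norm_eq_abs, abs_of_pos (by linarith : (0:ℝ) < y - b)]
    · rw [inv_nonneg]; linarith
  apply le_trans h1
  have h2 : ∫ z in Ico b y, ‖φ z - φ y‖ ≤ ∫ z in Icc b y, ‖φ z - φ y‖ := by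
    have hint : IntegrableOn (fun z => ‖φ z - φ y‖) (Icc b y) volume := by
      apply Integrable.norm
      exact hφ.integrableOn.sub (integrableOn_const
        (by rw [Real.volume_Icc]; exact ENNReal.ofReal_ne_top))
    apply setIntegral_mono_set hint
      (by filter_upwards with z using norm_nonneg _)
      Set.Ico_subset_Icc_self.eventuallyLE
  have h3 : ⨍ z in Icc b y, ‖φ z - φ y‖
      = (y - b)⁻¹ * ∫ z in Icc b y, ‖φ z - φ y‖ := by
    rw [setAverage_eq, Real.volume_real_Icc_of_le (by linarith), smul_eq_mul]
  rw [h3]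
  apply mul_le_mul_of_nonneg_left h2
  rw [inv_nonneg]; linarith



section caseB
variable {g : ℝ → ℝ} {T : ℝ} (hg : Monotone g) (hT : 0 ≤ T)
  (hlc : ∀ t : ℝ, ContinuousWithinAt g (Set.Iio t) t)
  {μ : Measure ℝ}
  {f : ℝ → ℝ} (hf : IntegrableOn f (Set.Icc 0 T) μ)
  {F : ℝ → ℝ}
  (F_diff' : ∀ {t s : ℝ}, 0 ≤ t → t ≤ s → s ≤ T → F s - F t = ∫ x in Ico t s, f x ∂μ)
  (transfer : ∀ {t s : ℝ}, 0 ≤ t → t ≤ s → s ≤ T →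
    ∫ x in Ico t s, f x ∂μ = ∫ y in Ico (g t) (g s), f (hh g T y))
  (hh_eq_self' : ∀ {t : ℝ}, t ∈ Ico 0 T → (∀ s, t < s → g t < g s) → hh g T (g t) = t)
  (hftil : Integrable ((Ico (g 0) (g T)).indicator (fun y => f (hh g T y))) volume)
  (avgR : ∀ {φ : ℝ → ℝ}, Integrable φ volume → ∀ {y : ℝ},
    Tendsto (fun b => ⨍ z in Icc y b, ‖φ z - φ y‖) (nhdsWithin y (Ioi y)) (nhds 0) →
    Tendsto (fun b => (b - y)⁻¹ * ∫ z in Ico y b, φ z) (nhdsWithin y (Ioi y)) (nhds (φ y)))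
  (avgL : ∀ {φ : ℝ → ℝ}, Integrable φ volume → ∀ {y : ℝ},
    Tendsto (fun b => ⨍ z in Icc b y, ‖φ z - φ y‖) (nhdsWithin y (Iio y)) (nhds 0) →
    Tendsto (fun b => (y - b)⁻¹ * ∫ z in Ico b y, φ z) (nhdsWithin y (Iio y)) (nhds (φ y)))

set_option maxHeartbeats 1000000 in
include hg hT hlc hf F_diff' transfer hh_eq_self' hftil avgR avgL in
lemma caseB {t : ℝ} (ht0 : 0 ≤ t) (htT : t < T)
    (hnj : ¬ g t < Function.rightLim g t)
    (hK : ¬ ∃ a b : ℝ, a < b ∧ g a = g t ∧ g b = g t)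
    (hgoodR : Tendsto (fun b => ⨍ z in Icc (g t) b,
        ‖(Ico (g 0) (g T)).indicator (fun y => f (hh g T y)) z
          - (Ico (g 0) (g T)).indicator (fun y => f (hh g T y)) (g t)‖)
        (nhdsWithin (g t) (Ioi (g t))) (nhds 0))
    (hgoodL : Tendsto (fun b => ⨍ z in Icc b (g t),
        ‖(Ico (g 0) (g T)).indicator (fun y => f (hh g T y)) z
          - (Ico (g 0) (g T)).indicator (fun y => f (hh g T y)) (g t)‖)
        (nhdsWithin (g t) (Iio (g t))) (nhds 0)) :
    Tendsto (fun s => (g s - g t)⁻¹ • (F s - F t)) (nhdsWithin t (Icc 0 T \ {t}))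
      (nhds (f t)) := by
  set ftil := (Ico (g 0) (g T)).indicator (fun y => f (hh g T y)) with hftil_def
  set y := g t with hy
  have hrl : Function.rightLim g t = g t := le_antisymm (not_lt.1 hnj) (hg.le_rightLim le_rfl)
  have hstrict : ∀ s, t < s → g t < g s := by
    intro s hs
    rcases lt_or_eq_of_le (hg hs.le) with h | h
    · exact h
    · exact absurd ⟨t, s, hs, rfl, h.symm⟩ hK
  have hstrictL : ∀ s, s < t → g s < g t := by
    intro s hs
    rcases lt_or_eq_of_le (hg hs.le) with h | h
    · exact h
    · exact absurd ⟨s, t, hs, h, rfl⟩ hK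
  have hyI : y ∈ Ico (g 0) (g T) := ⟨hg ht0, hstrict T htT⟩
  have hfty : ftil y = f t := by
    rw [hftil_def, Set.indicator_of_mem hyI, hh_eq_self' ⟨ht0, htT⟩ hstrict]
  have hsplit : (Icc 0 T \ {t} : Set ℝ) = (Icc 0 T ∩ Iio t) ∪ (Icc 0 T ∩ Ioi t) := by
    ext s
    simp only [Set.mem_diff, Set.mem_singleton_iff, Set.mem_union, Set.mem_inter_iff,
      Set.mem_Iio, Set.mem_Ioi]
    constructor
    · rintro ⟨hs, hne⟩
      rcases lt_trichotomy s t with h | h | h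
      · exact Or.inl ⟨hs, h⟩
      · exact absurd h hne
      · exact Or.inr ⟨hs, h⟩
    · rintro (⟨hs, h⟩ | ⟨hs, h⟩)
      · exact ⟨hs, ne_of_lt h⟩
      · exact ⟨hs, ne_of_gt h⟩
  rw [hsplit, nhdsWithin_union, tendsto_sup]
  constructor
  · -- left
    have hgL : Tendsto g (nhdsWithin t (Icc 0 T ∩ Iio t)) (nhdsWithin y (Iio y)) := by
      rw [tendsto_nhdsWithin_iff]
      constructor
      · exact (hlc t).mono_left (nhdsWithin_mono t Set.inter_subset_right)
      · filter_upwards [self_mem_nhdsWithin] with s hs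
        exact hstrictL s hs.2
    have hquot := (avgL hftil hgoodL).comp hgL
    rw [hfty] at hquot
    apply hquot.congr'
    filter_upwards [self_mem_nhdsWithin] with s hs
    have hs0 : 0 ≤ s := hs.1.1
    have hst : s < t := hs.2
    have h1 : F t - F s = ∫ x in Ico s t, f x ∂μ := F_diff' hs0 hst.le htT.le
    have h2 : ∫ x in Ico s t, f x ∂μ = ∫ z in Ico (g s) (g t), f (hh g T z) :=
      transfer hs0 hst.le htT.le
    have h3 : ∫ z in Ico (g s) y, ftil z = ∫ z in Ico (g s) y, f (hh g T z) := by
      apply setIntegral_congr_fun measurableSet_Ico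
      intro z hz
      exact Set.indicator_of_mem
        (Set.mem_Ico.2 ⟨le_trans (hg hs0) hz.1, lt_of_lt_of_le hz.2 (hstrict T htT).le⟩) _
    show (y - g s)⁻¹ * ∫ z in Ico (g s) y, ftil z = (g s - g t)⁻¹ • (F s - F t)
    rw [smul_eq_mul, h3, ← hy, ← h2]
    have e1 : F s - F t = -(F t - F s) := by ring
    have e2 : g s - g t = -(y - g s) := by rw [hy]; ring
    rw [e1, e2, h1, inv_neg]
    ring
  · -- right
    have hgR : Tendsto g (nhdsWithin t (Icc 0 T ∩ Ioi t)) (nhdsWithin y (Ioi y)) := by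
      rw [tendsto_nhdsWithin_iff]
      constructor
      · have := hg.tendsto_rightLim t
        rw [hrl] at this
        exact this.mono_left (nhdsWithin_mono t Set.inter_subset_right)
      · filter_upwards [self_mem_nhdsWithin] with s hs
        exact hstrict s hs.2
    have hquot := (avgR hftil hgoodR).comp hgR
    rw [hfty] at hquot
    apply hquot.congr'
    filter_upwards [self_mem_nhdsWithin] with s hs
    have hst : t < s := hs.2
    have hsT : s ≤ T := hs.1.2
    have h1 : F s - F t = ∫ x in Ico t s, f x ∂μ := F_diff' ht0 hst.le hsT
    have h2 : ∫ x in Ico t s, f x ∂μ = ∫ z in Ico (g t) (g s), f (hh g T z) :=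
      transfer ht0 hst.le hsT
    have h3 : ∫ z in Ico y (g s), ftil z = ∫ z in Ico y (g s), f (hh g T z) := by
      apply setIntegral_congr_fun measurableSet_Ico
      intro z hz
      exact Set.indicator_of_mem
        (Set.mem_Ico.2 ⟨le_trans (hg ht0) hz.1, lt_of_lt_of_le hz.2 (hg hsT)⟩) _
    show (g s - y)⁻¹ * ∫ z in Ico y (g s), ftil z = (g s - g t)⁻¹ • (F s - F t)
    rw [smul_eq_mul, h3, ← hy, ← h2, h1]
end caseB


lemma K_countable {g : ℝ → ℝ} (hg : Monotone g) :
    {y : ℝ | ∃ a b : ℝ, a < b ∧ g a = y ∧ g b = y}.Countable := by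
  apply Set.Countable.mono _ ((Set.countable_range (fun q : ℚ => (q:ℝ))).image g)
  rintro y ⟨a, b, hab, ha, hb⟩
  obtain ⟨q, hq1, hq2⟩ := exists_rat_btwn hab
  refine ⟨(q:ℝ), ⟨q, rfl⟩, ?_⟩
  have h1 : g a ≤ g q := hg hq1.le
  have h2 : g q ≤ g b := hg hq2.le
  rw [ha] at h1
  rw [hb] at h2
  linarith

lemma D_countable {g : ℝ → ℝ} (hg : Monotone g) :
    {t : ℝ | g t < Function.rightLim g t}.Countable := by
  apply hg.countable_not_continuousAt.mono
  intro t ht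
  simp only [Set.mem_setOf_eq] at ht ⊢
  intro hcont
  have := hg.continuousWithinAt_Ioi_iff_rightLim_eq.1 hcont.continuousWithinAt
  rw [this] at ht
  exact lt_irrefl _ ht


end Auxiliary

set_option maxHeartbeats 2000000 in
/-- Generalized Lebesgue differentiation theorem (scalar case): the indefinite
Lebesgue–Stieltjes integral of a `μ_g`-integrable function is `g`-differentiable
`μ_g`-a.e. with derivative `f`. -/
theorem stmt0
    (g : ℝ → ℝ) (hg : Monotone g)
    (hlc : ∀ t : ℝ, ContinuousWithinAt g (Set.Iio t) t)
    (μ : Measure ℝ)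
    (hμ : ∀ a b : ℝ, a ≤ b → μ (Set.Ico a b) = ENNReal.ofReal (g b - g a))
    (T : ℝ) (hT : 0 ≤ T)
    (f : ℝ → ℝ) (hf : IntegrableOn f (Set.Icc 0 T) μ)
    (F : ℝ → ℝ) (hF : ∀ t ∈ Set.Icc 0 T, F t = ∫ s in Set.Ico 0 t, f s ∂μ) :
    ∃ N ⊆ Set.Icc 0 T, MeasurableSet N ∧ μ N = 0 ∧
      ∀ t ∈ Set.Icc 0 T \ N, HasDerivG g (Set.Icc 0 T) F t (f t) := by
  classical
  have hh_mono' : Monotone (hh g T) := hh_mono hT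
  have hh_pre := hh_preimage_Ico hg hT hlc
  have hmap : μ.restrict (Ico 0 T)
      = Measure.map (hh g T) (volume.restrict (Ico (g 0) (g T))) :=
    measure_restrict_eq_map' hg hT hμ hh_mono' hh_pre
  have msing : ∀ t, μ {t} = ENNReal.ofReal (Function.rightLim g t - g t) :=
    measure_singleton_eq hg μ hμ
  have F_diff' : ∀ {t s : ℝ}, 0 ≤ t → t ≤ s → s ≤ T →
      F s - F t = ∫ x in Ico t s, f x ∂μ :=
    fun ht hts hsT => F_diff hf hF ht hts hsT
  have transfer : ∀ {t s : ℝ}, 0 ≤ t → t ≤ s → s ≤ T →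
      ∫ x in Ico t s, f x ∂μ = ∫ y in Ico (g t) (g s), f (hh g T y) :=
    fun ht hts hsT => integral_Ico_transfer hg hh_mono' hh_pre hmap hf ht hts hsT
  set ftil := (Ico (g 0) (g T)).indicator (fun y => f (hh g T y)) with hftil_def
  have hftil : Integrable ftil volume := by
    rw [hftil_def, integrable_indicator_iff measurableSet_Ico]
    have h1 : Integrable f (μ.restrict (Ico 0 T)) := hf.mono_set Set.Ico_subset_Icc_self
    rw [hmap] at h1
    exact (integrable_map_measure h1.aestronglyMeasurable
      hh_mono'.measurable.aemeasurable).1 h1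
  have hBad0 : volume {y : ℝ | ¬ (Tendsto (fun b => ⨍ z in Icc y b, ‖ftil z - ftil y‖)
        (nhdsWithin y (Ioi y)) (nhds 0)
      ∧ Tendsto (fun b => ⨍ z in Icc b y, ‖ftil z - ftil y‖)
        (nhdsWithin y (Iio y)) (nhds 0))} = 0 :=
    ae_iff.1 (goodY_ae hftil)
  set B := toMeasurable volume {y : ℝ | ¬ (Tendsto (fun b => ⨍ z in Icc y b, ‖ftil z - ftil y‖)
        (nhdsWithin y (Ioi y)) (nhds 0)
      ∧ Tendsto (fun b => ⨍ z in Icc b y, ‖ftil z - ftil y‖)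
        (nhdsWithin y (Iio y)) (nhds 0))} with hB_def
  have hBmeas : MeasurableSet B := measurableSet_toMeasurable _ _
  have hB0 : volume B = 0 := by rw [hB_def, measure_toMeasurable]; exact hBad0
  set K' := {y : ℝ | ∃ a b : ℝ, a < b ∧ g a = y ∧ g b = y} with hK'_def
  have hK'c : K'.Countable := K_countable hg
  have hDc : {t : ℝ | g t < Function.rightLim g t}.Countable := D_countable hg
  set M := ((g ⁻¹' (K' ∪ B)) ∩ Ico 0 T) \ {t : ℝ | g t < Function.rightLim g t} with hM_def
  have hMmeas : MeasurableSet M :=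
    ((hg.measurable (hK'c.measurableSet.union hBmeas)).inter measurableSet_Ico).diff
      hDc.measurableSet
  have hMsub : M ⊆ Ico 0 T := fun x hx => hx.1.2
  have hM0 : μ M = 0 := by
    have h1 : μ M = μ.restrict (Ico 0 T) M := by
      rw [Measure.restrict_apply hMmeas, Set.inter_eq_self_of_subset_left hMsub]
    rw [h1, hmap, Measure.map_apply hh_mono'.measurable hMmeas,
      Measure.restrict_apply (hh_mono'.measurable hMmeas)]
    have hsub2 : hh g T ⁻¹' M ∩ Ico (g 0) (g T) ⊆ K' ∪ B := by
      intro y hy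
      have htM : hh g T y ∈ M := hy.1
      have hnj : ¬ g (hh g T y) < Function.rightLim g (hh g T y) := htM.2
      have h3 : g (hh g T y) ≤ y := g_hh_le hg hT hlc hy.2
      have h4 : y ≤ Function.rightLim g (hh g T y) := le_rightLim_hh hg hT hlc hy.2
      have h5 : y = g (hh g T y) := le_antisymm (h4.trans (not_lt.1 hnj)) h3
      rw [h5]
      exact htM.1.1
    exact measure_mono_null hsub2 (measure_union_null (hK'c.measure_zero _) hB0)
  set E := if g T < Function.rightLim g T then (∅ : Set ℝ) else {T} with hE_def
  have hEmeas : MeasurableSet E := by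
    rw [hE_def]; split_ifs
    exacts [MeasurableSet.empty, measurableSet_singleton T]
  have hEsub : E ⊆ Icc 0 T := by
    rw [hE_def]; split_ifs
    · exact Set.empty_subset _
    · intro x hx
      rw [Set.mem_singleton_iff] at hx
      subst hx
      exact ⟨hT, le_rfl⟩
  have hE0 : μ E = 0 := by
    rw [hE_def]; split_ifs with h
    · exact measure_empty
    · have hrT : Function.rightLim g T = g T :=
        le_antisymm (not_lt.1 h) (hg.le_rightLim le_rfl)
      rw [msing T, hrT]
      simp
  refine ⟨M ∪ E, Set.union_subset (hMsub.trans Set.Ico_subset_Icc_self) hEsub,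
    hMmeas.union hEmeas, measure_union_null hM0 hE0, ?_⟩
  rintro t ⟨htI, htN⟩
  rw [HasDerivG]
  split_ifs with hjump
  · exact jump_case hg hμ hf (fun {a b} h1 h2 h3 => F_diff' h1 h2 h3)
      (fun {a} h => tendsto_Ioo_integral hf h) msing htI hjump
  · have htT : t < T := by
      rcases lt_or_eq_of_le htI.2 with h | h
      · exact h
      · exfalso
        apply htN
        right
        rw [hE_def, if_neg (by rw [← h]; exact hjump)]
        exact Set.mem_singleton_iff.2 h
    have hKB : g t ∉ K' ∪ B := by
      intro hmem
      exact htN (Or.inl ⟨⟨hmem, ⟨htI.1, htT⟩⟩, hjump⟩)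
    have hK : ¬∃ a b : ℝ, a < b ∧ g a = g t ∧ g b = g t := fun hcon => hKB (Or.inl hcon)
    have hgood : Tendsto (fun b => ⨍ z in Icc (g t) b, ‖ftil z - ftil (g t)‖)
          (nhdsWithin (g t) (Ioi (g t))) (nhds 0)
        ∧ Tendsto (fun b => ⨍ z in Icc b (g t), ‖ftil z - ftil (g t)‖)
          (nhdsWithin (g t) (Iio (g t))) (nhds 0) := by
      by_contra hbad
      exact hKB (Or.inr (subset_toMeasurable _ _ hbad))
    exact caseB hg hT hlc hf (fun {a b} h1 h2 h3 => F_diff' h1 h2 h3)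
      (fun {a b} h1 h2 h3 => transfer h1 h2 h3)
      (fun {a} h1 h2 => hh_eq_self hg hT hlc h1 h2) hftil
      (fun {φ} h {y} hy => avg_quotient_right h hy)
      (fun {φ} h {y} hy => avg_quotient_left h hy)
      htI.1 htT hjump hK hgood.1 hgood.2
end

section
/- Let g: ℝ → ℝ be nondecreasing and left-continuous with Lebesgue–Stieltjes measure μ_g, V a real Banach space, and f: [0,T] → V a Bochner μ_g-integrable function of finite rank (i.e., the range of f spans a finite-dimensional subspace of V). Define F(t) = ∫_{[0,t)} f dμ_g ∈ V. Then there exists a μ_g-null set N ⊆ [0,T] such that F'_g(t) = f(t) in V for all t ∈ [0,T] \ N. -/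
open MeasureTheory Filter Set
open scoped Topology ENNReal NNReal

/-- Basic estimate: the integral of `f₁` over an interval of length `r` inside the closed ball
of radius `r` around `y` differs from `r • f₁ y` by at most the integral of `‖f₁ · - f₁ y‖`
over the ball. -/
theorem aux_est {V : Type*} [NormedAddCommGroup V] [NormedSpace ℝ V] [CompleteSpace V]
    (f₁ : ℝ → V) (hf₁ : Integrable f₁ volume) (y a b r : ℝ) (hr : 0 < r)
    (hba : b - a = r) (hsub : Ico a b ⊆ Metric.closedBall y r) :
    ‖(∫ x in Ico a b, f₁ x) - r • f₁ y‖ ≤ ∫ x in Metric.closedBall y r, ‖f₁ x - f₁ y‖ := by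
  have hvol : (volume (Ico a b)).toReal = r := by
    rw [Real.volume_Ico, hba, ENNReal.toReal_ofReal hr.le]
  have h1 : ∫ _ in Ico a b, f₁ y = r • f₁ y := by
    rw [setIntegral_const, measureReal_def, hvol]
  have hconst : ∀ s : Set ℝ, volume s < ⊤ → IntegrableOn (fun _ => f₁ y) s volume :=
    fun s hs => integrableOn_const hs.ne
  have hint : IntegrableOn (fun x => f₁ x - f₁ y) (Metric.closedBall y r) volume :=
    hf₁.integrableOn.sub (hconst _ (by rw [Real.volume_closedBall]; exact ENNReal.ofReal_lt_top))
  rw [← h1, ← integral_sub hf₁.integrableOn (hconst _ (by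
    rw [Real.volume_Ico]; exact ENNReal.ofReal_lt_top))]
  calc ‖∫ x in Ico a b, (f₁ x - f₁ y)‖ ≤ ∫ x in Ico a b, ‖f₁ x - f₁ y‖ :=
        norm_integral_le_integral_norm _
    _ ≤ ∫ x in Metric.closedBall y r, ‖f₁ x - f₁ y‖ := by
        apply setIntegral_mono_set hint.norm
        · exact Eventually.of_forall fun x => norm_nonneg _
        · exact HasSubset.Subset.eventuallyLE hsub

theorem aux_A {V : Type*} [NormedAddCommGroup V] (f₁ : ℝ → V) (y : ℝ)
    (hy : Tendsto (fun r => ⨍ z in Metric.closedBall y r, ‖f₁ z - f₁ y‖) (𝓝[>] (0:ℝ)) (𝓝 0)) :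
    Tendsto (fun r => r⁻¹ * ∫ z in Metric.closedBall y r, ‖f₁ z - f₁ y‖) (𝓝[>] (0:ℝ)) (𝓝 0) := by
  have h2 : Tendsto (fun r => 2 * ⨍ z in Metric.closedBall y r, ‖f₁ z - f₁ y‖)
      (𝓝[>] (0:ℝ)) (𝓝 0) := by
    have := hy.const_mul 2
    simpa using this
  apply h2.congr'
  filter_upwards [self_mem_nhdsWithin] with r hr
  have hr0 : (0:ℝ) < r := hr
  rw [setAverage_eq, measureReal_def, Real.volume_closedBall, ENNReal.toReal_ofReal (by linarith), smul_eq_mul]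
  field_simp

section Phi

variable (g : ℝ → ℝ) (T : ℝ)

/-- The "generalized inverse" of `g` on `[0, T]`. -/
noncomputable def auxPhi : ℝ → ℝ := fun y => sSup {t : ℝ | t ∈ Icc 0 T ∧ g t ≤ y}

variable {g T}

theorem auxPhi_mono (hg : Monotone g) : Monotone (auxPhi g T) := by
  intro y y' h
  by_cases hne : {t : ℝ | t ∈ Icc 0 T ∧ g t ≤ y}.Nonempty
  · exact csSup_le_csSup ⟨T, fun t ht => ht.1.2⟩ hne
      (fun t ht => ⟨ht.1, ht.2.trans h⟩)
  · rw [auxPhi, not_nonempty_iff_eq_empty.mp hne, Real.sSup_empty]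
    exact Real.sSup_nonneg (fun x hx => hx.1.1)

theorem auxPhi_mem (hg : Monotone g) (hlc : ∀ t : ℝ, ContinuousWithinAt g (Iio t) t)
    (hT : 0 ≤ T) {y : ℝ} (hy : g 0 ≤ y) :
    auxPhi g T y ∈ Icc 0 T ∧ g (auxPhi g T y) ≤ y := by
  set S := {t : ℝ | t ∈ Icc 0 T ∧ g t ≤ y} with hS
  have hmem0 : (0:ℝ) ∈ S := ⟨⟨le_refl _, hT⟩, hy⟩
  have hne : S.Nonempty := ⟨0, hmem0⟩
  have hbdd : BddAbove S := ⟨T, fun t ht => ht.1.2⟩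
  have h0 : (0:ℝ) ≤ sSup S := le_csSup hbdd hmem0
  have hTT : sSup S ≤ T := csSup_le hne (fun t ht => ht.1.2)
  have hgle : ∀ t' ∈ Iio (sSup S), g t' ≤ y := by
    intro t' ht'
    obtain ⟨t'', ht''S, h⟩ := exists_lt_of_lt_csSup hne ht'
    exact (hg h.le).trans ht''S.2
  have hlim : g (sSup S) ≤ y := by
    have h1 : Tendsto g (𝓝[Iio (sSup S)] (sSup S)) (𝓝 (g (sSup S))) := hlc (sSup S)
    exact le_of_tendsto h1 (eventually_mem_nhdsWithin.mono hgle)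
  exact ⟨⟨h0, hTT⟩, hlim⟩

theorem auxPhi_le_iff (hg : Monotone g) (hlc : ∀ t : ℝ, ContinuousWithinAt g (Iio t) t)
    (hT : 0 ≤ T) {a y : ℝ} (ha : a ∈ Icc 0 T) (hy : g 0 ≤ y) :
    a ≤ auxPhi g T y ↔ g a ≤ y := by
  constructor
  · intro h
    exact (hg h).trans (auxPhi_mem hg hlc hT hy).2
  · intro h
    exact le_csSup ⟨T, fun t ht => ht.1.2⟩ ⟨ha, h⟩

end Phi

set_option maxHeartbeats 1000000 in
/-- Generalized Lebesgue differentiation theorem for finite rank Bochner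
`μ_g`-integrable functions. -/
theorem stmt1
    {V : Type*} [NormedAddCommGroup V] [NormedSpace ℝ V] [CompleteSpace V]
    (g : ℝ → ℝ) (hg : Monotone g)
    (hlc : ∀ t : ℝ, ContinuousWithinAt g (Set.Iio t) t)
    (μ : Measure ℝ)
    (hμ : ∀ a b : ℝ, a ≤ b → μ (Set.Ico a b) = ENNReal.ofReal (g b - g a))
    (T : ℝ) (hT : 0 ≤ T)
    (f : ℝ → V) (hf : IntegrableOn f (Set.Icc 0 T) μ)
    (hrank : ∃ S : Submodule ℝ V, FiniteDimensional ℝ S ∧ ∀ t ∈ Set.Icc 0 T, f t ∈ S)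
    (F : ℝ → V) (hF : ∀ t ∈ Set.Icc 0 T, F t = ∫ s in Set.Ico 0 t, f s ∂μ) :
    ∃ N ⊆ Set.Icc 0 T, MeasurableSet N ∧ μ N = 0 ∧
      ∀ t ∈ Set.Icc 0 T \ N, HasDerivG g (Set.Icc 0 T) F t (f t) := by
  classical
  clear hrank
  set φ : ℝ → ℝ := auxPhi g T with hφdef
  have hφmono : Monotone φ := auxPhi_mono hg
  have hφmeas : Measurable φ := hφmono.measurable
  have hgmeas : Measurable g := hg.measurable
  set I : Set ℝ := Ico (g 0) (g T) with hIdef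
  set lam : Measure ℝ := volume.restrict I with hlamdef
  have key_mem : ∀ y ∈ I, φ y ∈ Icc 0 T ∧ g (φ y) ≤ y :=
    fun y hy => auxPhi_mem hg hlc hT hy.1
  have key_le : ∀ (a : ℝ), a ∈ Icc 0 T → ∀ (y : ℝ), g 0 ≤ y → (a ≤ φ y ↔ g a ≤ y) :=
    fun a ha y hy => auxPhi_le_iff hg hlc hT ha hy
  have hφ0 : ∀ y ∈ I, 0 ≤ φ y := fun y hy => (key_mem y hy).1.1
  have hφT : ∀ y ∈ I, φ y < T := by
    intro y hy
    rcases eq_or_lt_of_le (key_mem y hy).1.2 with h | h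
    · exfalso
      have := (key_le T ⟨hT, le_rfl⟩ y hy.1).mp (h ▸ le_rfl)
      exact absurd this (not_le.2 hy.2)
    · exact h
  -- preimage of a subinterval of [0,T]
  have hpre : ∀ a b : ℝ, a ∈ Icc 0 T → b ∈ Icc 0 T →
      φ ⁻¹' (Ico a b) ∩ I = Ico (g a) (g b) := by
    intro a b ha hb
    ext y
    simp only [mem_inter_iff, mem_preimage, mem_Ico]
    constructor
    · rintro ⟨⟨h1, h2⟩, hyI⟩
      refine ⟨(key_le a ha y hyI.1).mp h1, ?_⟩
      by_contra hcon
      exact absurd ((key_le b hb y hyI.1).mpr (not_lt.1 hcon)) (not_le.2 h2)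
    · rintro ⟨h1, h2⟩
      have hyI : y ∈ I := ⟨(hg ha.1).trans h1, lt_of_lt_of_le h2 (hg hb.2)⟩
      refine ⟨⟨(key_le a ha y hyI.1).mpr h1, ?_⟩, hyI⟩
      by_contra hcon
      exact absurd ((key_le b hb y hyI.1).mp (not_lt.1 hcon)) (not_le.2 h2)
  haveI hlamfin : IsFiniteMeasure lam :=
    ⟨by rw [hlamdef, Measure.restrict_apply_univ, hIdef, Real.volume_Ico]
        exact ENNReal.ofReal_lt_top⟩
  -- the pushforward identity
  have hresmap : Measure.map φ lam = μ.restrict (Ico 0 T) := by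
    haveI : IsFiniteMeasure (μ.restrict (Ico 0 T)) :=
      ⟨by rw [Measure.restrict_apply_univ, hμ 0 T hT]; exact ENNReal.ofReal_lt_top⟩
    apply MeasureTheory.Measure.ext_of_Ico_finite
    · rw [Measure.map_apply hφmeas MeasurableSet.univ, preimage_univ,
        Measure.restrict_apply_univ, Measure.restrict_apply_univ, hμ 0 T hT, hIdef,
        Real.volume_Ico]
    · intro a b hab
      rw [Measure.map_apply hφmeas measurableSet_Ico, hlamdef,
        Measure.restrict_apply (hφmeas measurableSet_Ico),
        Measure.restrict_apply measurableSet_Ico, Ico_inter_Ico]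
      by_cases hb0 : b ≤ 0
      · have h1 : φ ⁻¹' (Ico a b) ∩ I = ∅ := by
          apply eq_empty_iff_forall_notMem.2
          rintro y ⟨hy1, hy2⟩
          exact absurd (hφ0 y hy2) (not_le.2 (lt_of_lt_of_le hy1.2 hb0))
        have h2 : Ico (max a 0) (min b T) = ∅ := by
          apply Ico_eq_empty
          intro hcon
          exact absurd ((le_max_right a 0).trans_lt (hcon.trans_le (min_le_left b T))) (not_lt.2 hb0)
        rw [h1, h2, measure_empty, measure_empty]
      push_neg at hb0
      by_cases haT : T < a
      · have h1 : φ ⁻¹' (Ico a b) ∩ I = ∅ := by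
          apply eq_empty_iff_forall_notMem.2
          rintro y ⟨hy1, hy2⟩
          exact absurd ((key_mem y hy2).1.2) (not_le.2 (lt_of_lt_of_le haT hy1.1))
        have h2 : Ico (max a 0) (min b T) = ∅ := by
          apply Ico_eq_empty
          intro hcon
          exact absurd (((le_max_left a 0).trans_lt (hcon.trans_le (min_le_right b T)))) (not_lt.2 haT.le)
        rw [h1, h2, measure_empty, measure_empty]
      push_neg at haT
      have ha' : max a 0 ∈ Icc 0 T := ⟨le_max_right _ _, max_le haT hT⟩
      have hb' : min b T ∈ Icc 0 T := ⟨le_min hb0.le hT, min_le_right _ _⟩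
      have hset : φ ⁻¹' (Ico a b) ∩ I = Ico (g (max a 0)) (g (min b T)) := by
        rw [← hpre _ _ ha' hb']
        ext y
        simp only [mem_inter_iff, mem_preimage, mem_Ico]
        constructor
        · rintro ⟨⟨h1, h2⟩, hyI⟩
          exact ⟨⟨max_le h1 (hφ0 y hyI), lt_min h2 (hφT y hyI)⟩, hyI⟩
        · rintro ⟨⟨h1, h2⟩, hyI⟩
          exact ⟨⟨(le_max_left a 0).trans h1, h2.trans_le (min_le_left b T)⟩, hyI⟩
      rw [hset, Real.volume_Ico]
      rcases le_or_gt (max a 0) (min b T) with h | h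
      · rw [hμ _ _ h]
      · rw [Ico_eq_empty (not_lt.2 h.le), measure_empty]
        exact ENNReal.ofReal_eq_zero.2 (sub_nonpos.2 (hg h.le))
  -- pushforward of measures of measurable subsets of [0,T)
  have hpush : ∀ A : Set ℝ, MeasurableSet A → A ⊆ Ico 0 T → μ A = volume (φ ⁻¹' A ∩ I) := by
    intro A hA hsub
    have h1 : μ.restrict (Ico 0 T) A = μ A := by
      rw [Measure.restrict_apply hA, inter_eq_self_of_subset_left hsub]
    rw [← h1, ← hresmap, Measure.map_apply hφmeas hA, hlamdef,
      Measure.restrict_apply (hφmeas hA)]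
  -- the transported function
  set f₁ : ℝ → V := I.indicator (f ∘ φ) with hf₁def
  have hfm : AEStronglyMeasurable f (Measure.map φ lam) := by
    rw [hresmap]
    exact hf.aestronglyMeasurable.mono_measure
      (Measure.restrict_mono Ico_subset_Icc_self le_rfl)
  have hfμ : Integrable f (Measure.map φ lam) := by
    rw [hresmap]
    exact hf.mono_set Ico_subset_Icc_self
  have hfφ : Integrable (f ∘ φ) lam :=
    (integrable_map_measure hfm hφmeas.aemeasurable).mp hfμ
  have hf₁int : Integrable f₁ volume := by
    rw [hf₁def, hIdef]
    rw [integrable_indicator_iff measurableSet_Ico]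
    exact hfφ
  -- integral transfer on subintervals
  have htrans : ∀ t s : ℝ, 0 ≤ t → t ≤ s → s ≤ T →
      ∫ x in Ico t s, f x ∂μ = ∫ x in Ico (g t) (g s), f₁ x := by
    intro t s h0 hts hsT
    have hsub : Ico t s ⊆ Ico 0 T := fun x hx => ⟨h0.trans hx.1, lt_of_lt_of_le hx.2 hsT⟩
    have e1 : ∫ x in Ico t s, f x ∂μ = ∫ x in Ico t s, f x ∂(μ.restrict (Ico 0 T)) := by
      rw [Measure.restrict_restrict measurableSet_Ico,
        inter_eq_self_of_subset_left hsub]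
    rw [e1, ← hresmap, setIntegral_map measurableSet_Ico hfm hφmeas.aemeasurable, hlamdef,
      Measure.restrict_restrict (hφmeas measurableSet_Ico)]
    rw [hpre t s ⟨h0, hts.trans hsT⟩ ⟨h0.trans hts, hsT⟩]
    apply setIntegral_congr_fun measurableSet_Ico
    intro x hx
    have hxI : x ∈ I := ⟨(hg h0).trans hx.1, lt_of_lt_of_le hx.2 (hg hsT)⟩
    rw [hf₁def, indicator_of_mem hxI]
    rfl
  -- measure of a singleton
  have hsingle : ∀ t : ℝ, μ {t} = ENNReal.ofReal (Function.rightLim g t - g t) := by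
    intro t
    have h1 : Tendsto (fun r => μ (Ico t r)) (𝓝[>] t) (𝓝 (μ (⋂ r > t, Ico t r))) := by
      apply tendsto_measure_biInter_gt
      · exact fun r _ => measurableSet_Ico.nullMeasurableSet
      · exact fun i j _ hij => Ico_subset_Ico_right hij
      · exact ⟨t + 1, by linarith, by
          rw [hμ t (t+1) (by linarith)]; exact ENNReal.ofReal_ne_top⟩
    have h2 : (⋂ r > t, Ico t r) = {t} := by
      ext x
      simp only [mem_iInter, mem_Ico, mem_singleton_iff]
      constructor
      · intro h
        have hle : t ≤ x := (h (t+1) (by linarith)).1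
        rcases eq_or_lt_of_le hle with h' | h'
        · exact h'.symm
        · exact absurd (h x h').2 (lt_irrefl x)
      · rintro rfl
        exact fun r hr => ⟨le_rfl, hr⟩
    rw [h2] at h1
    have h3 : Tendsto (fun r => μ (Ico t r)) (𝓝[>] t)
        (𝓝 (ENNReal.ofReal (Function.rightLim g t - g t))) := by
      have hgr : Tendsto (fun r => g r - g t) (𝓝[>] t)
          (𝓝 (Function.rightLim g t - g t)) := (hg.tendsto_rightLim t).sub_const _
      have h4 := (ENNReal.continuous_ofReal.tendsto _).comp hgr
      apply h4.congr'
      filter_upwards [self_mem_nhdsWithin] with r hr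
      exact (hμ t r (le_of_lt hr)).symm
    exact tendsto_nhds_unique h1 h3
  -- the variation measure, for the jump case
  set ρ : Measure ℝ := (μ.restrict (Icc 0 T)).withDensity (fun x => (‖f x‖₊ : ℝ≥0∞))
    with hρdef
  haveI hρfin : IsFiniteMeasure ρ := by
    constructor
    rw [hρdef, withDensity_apply _ MeasurableSet.univ, setLIntegral_univ]
    exact hf.2
  have hρbound : ∀ A : Set ℝ, MeasurableSet A → A ⊆ Icc 0 T →
      (‖∫ x in A, f x ∂μ‖₊ : ℝ≥0∞) ≤ ρ A := by
    intro A hA hsub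
    have h1 : μ.restrict A = (μ.restrict (Icc 0 T)).restrict A := by
      rw [Measure.restrict_restrict hA, inter_eq_self_of_subset_left hsub]
    rw [hρdef, withDensity_apply _ hA]
    calc (‖∫ x in A, f x ∂μ‖₊ : ℝ≥0∞) ≤ ∫⁻ x in A, ‖f x‖₊ ∂μ :=
          enorm_integral_le_lintegral_enorm _
      _ = ∫⁻ x in A, ‖f x‖₊ ∂(μ.restrict (Icc 0 T)) := by rw [← h1]
  -- tendsto of the tail integral, for the jump case
  have hIoo : ∀ t : ℝ, t ∈ Icc 0 T →
      Tendsto (fun s => ∫ x in Ioo t s, f x ∂μ) (𝓝[Icc 0 T ∩ Ioi t] t) (𝓝 0) := by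
    intro t ht
    have h0 : Tendsto (fun s => ρ (Ioo t s)) (𝓝[>] t) (𝓝 (ρ (⋂ r > t, Ioo t r))) := by
      apply tendsto_measure_biInter_gt
      · exact fun r _ => measurableSet_Ioo.nullMeasurableSet
      · exact fun i j _ hij => Ioo_subset_Ioo_right hij
      · exact ⟨t + 1, by linarith, measure_ne_top ρ _⟩
    have hempty : (⋂ r > t, Ioo t r) = ∅ := by
      apply eq_empty_iff_forall_notMem.2
      intro x hx
      simp only [mem_iInter, mem_Ioo] at hx
      rcases lt_or_ge t x with h | h
      · exact absurd (hx x h).2 (lt_irrefl x)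
      · exact absurd (hx (t+1) (by linarith)).1 (not_lt.2 h)
    rw [hempty, measure_empty] at h0
    have h0' : Tendsto (fun s => ρ (Ioo t s)) (𝓝[Icc 0 T ∩ Ioi t] t) (𝓝 0) :=
      h0.mono_left (nhdsWithin_mono t inter_subset_right)
    have h1 : Tendsto (fun s => (ρ (Ioo t s)).toReal) (𝓝[Icc 0 T ∩ Ioi t] t) (𝓝 0) := by
      have := (ENNReal.tendsto_toReal (a := 0) (by simp)).comp h0'
      simpa [Function.comp_def] using this
    apply squeeze_zero_norm' _ h1
    filter_upwards [self_mem_nhdsWithin] with s hs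
    have hsubA : Ioo t s ⊆ Icc 0 T := fun x hx =>
      ⟨ht.1.trans hx.1.le, hx.2.le.trans hs.1.2⟩
    have h2 := hρbound (Ioo t s) measurableSet_Ioo hsubA
    have h3 := ENNReal.toReal_mono (measure_ne_top ρ _) h2
    rw [ENNReal.coe_toReal, coe_nnnorm] at h3
    exact h3
  -- Lebesgue points of f₁
  obtain ⟨B, hBsub, hBmeas, hBnull⟩ :
      ∃ B : Set ℝ, {x : ℝ | ¬ Tendsto
          (fun r => ⨍ z in Metric.closedBall x r, ‖f₁ z - f₁ x‖) (𝓝[>] (0:ℝ)) (𝓝 0)} ⊆ B ∧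
        MeasurableSet B ∧ volume B = 0 := by
    apply exists_measurable_superset_of_null
    have hleb := (Besicovitch.vitaliFamily (volume : Measure ℝ)).ae_tendsto_average_norm_sub
      hf₁int.locallyIntegrable
    have h2 : ∀ᵐ x ∂(volume : Measure ℝ), Tendsto
        (fun r => ⨍ z in Metric.closedBall x r, ‖f₁ z - f₁ x‖) (𝓝[>] (0:ℝ)) (𝓝 0) := by
      filter_upwards [hleb] with x hx
      exact hx.comp (Besicovitch.tendsto_filterAt _ x)
    exact ae_iff.mp h2
  -- the exceptional sets
  set Rset : Set ℝ := ⋃ q : ℚ, (Iio (q:ℝ) ∩ g ⁻¹' (Ici (g q))) with hRdef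
  set Lset : Set ℝ := ⋃ q : ℚ, (Ioi (q:ℝ) ∩ g ⁻¹' (Iic (g q))) with hLdef
  set D : Set ℝ := {x | g x < Function.rightLim g x} with hDdef
  have hDcount : D.Countable := by
    apply hg.countable_not_continuousAt.mono
    intro x hx hcont
    have h1 : Function.rightLim g x = g x :=
      rightLim_eq_of_tendsto
        (hcont.tendsto.mono_left nhdsWithin_le_nhds)
    rw [hDdef] at hx
    simp only [mem_setOf_eq, h1] at hx
    exact lt_irrefl _ hx
  set N : Set ℝ := (Icc 0 T \ D) ∩ (Rset ∪ Lset ∪ g ⁻¹' B ∪ {T}) with hNdef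
  have hNsub : N ⊆ Icc 0 T := fun x hx => hx.1.1
  have hNmeas : MeasurableSet N := by
    apply MeasurableSet.inter
    · exact measurableSet_Icc.diff hDcount.measurableSet
    · refine (((MeasurableSet.iUnion fun q =>
          measurableSet_Iio.inter (hgmeas measurableSet_Ici)).union
        (MeasurableSet.iUnion fun q =>
          measurableSet_Ioi.inter (hgmeas measurableSet_Iic))).union
        (hgmeas hBmeas)).union (measurableSet_singleton T)
  -- the key dichotomy : if φ y is not a jump point, then g (φ y) = y
  have hval : ∀ y ∈ I, φ y ∉ D → g (φ y) = y := by
    intro y hyI hyD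
    rcases eq_or_lt_of_le (key_mem y hyI).2 with h | h
    · exact h
    · exfalso
      apply hyD
      rw [hDdef]
      simp only [mem_setOf_eq]
      have htT : φ y < T := hφT y hyI
      have h2 : y ≤ Function.rightLim g (φ y) := by
        apply ge_of_tendsto (hg.tendsto_rightLim (φ y))
        filter_upwards [Ioc_mem_nhdsGT_of_mem (⟨le_refl (φ y), htT⟩ : φ y ∈ Ico (φ y) T)]
          with s hs
        by_contra hcon
        push_neg at hcon
        have hsmem : s ∈ Icc 0 T := ⟨(hφ0 y hyI).trans hs.1.le, hs.2⟩
        have := (key_le s hsmem y hyI.1).mpr hcon.le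
        exact absurd this (not_le.2 hs.1)
      exact lt_of_lt_of_le h h2
  -- nullity of N
  have hTnull : μ ({T} \ D) = 0 := by
    by_cases hTD : T ∈ D
    · have h0 : ({T} : Set ℝ) \ D = ∅ := by
        apply eq_empty_iff_forall_notMem.2
        rintro x ⟨rfl, hx2⟩
        exact hx2 hTD
      rw [h0, measure_empty]
    · have h2 : μ {T} = 0 := by
        rw [hsingle T]
        rw [hDdef] at hTD
        simp only [mem_setOf_eq, not_lt] at hTD
        exact ENNReal.ofReal_eq_zero.2 (by linarith)
      exact le_antisymm (le_trans (measure_mono diff_subset) h2.le) zero_le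
  have hXnull : μ (N ∩ Ico 0 T) = 0 := by
    have hXmeas : MeasurableSet (N ∩ Ico 0 T) := hNmeas.inter measurableSet_Ico
    rw [hpush _ hXmeas inter_subset_right]
    have hsub2 : φ ⁻¹' (N ∩ Ico 0 T) ∩ I ⊆ B ∪ (⋃ q : ℚ, {((g q : ℝ))}) := by
      rintro y ⟨hyX, hyI⟩
      simp only [mem_preimage] at hyX
      obtain ⟨⟨⟨htIcc', htD⟩, htmem⟩, htIco⟩ := hyX
      have hgy : g (φ y) = y := hval y hyI htD
      rcases htmem with ((hR | hL) | hB') | hTT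
      · exfalso
        obtain ⟨q, hq⟩ := mem_iUnion.mp hR
        have hq1 : φ y < (q:ℝ) := hq.1
        have hq2 : g q ≤ g (φ y) := hq.2
        rcases le_or_gt (q:ℝ) T with hqT | hqT
        · have hqmem : (q:ℝ) ∈ Icc 0 T := ⟨(hφ0 y hyI).trans hq1.le, hqT⟩
          have h3 : g q ≤ y := hgy ▸ hq2
          exact absurd ((key_le q hqmem y hyI.1).mpr h3) (not_le.2 hq1)
        · have h5 : g T ≤ g q := hg hqT.le
          have h6 : g (φ y) < g T := by rw [hgy]; exact hyI.2
          exact absurd (h5.trans hq2) (not_le.2 h6)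
      · obtain ⟨q, hq⟩ := mem_iUnion.mp hL
        refine Or.inr (mem_iUnion.mpr ⟨q, ?_⟩)
        have h3 : g (φ y) = g q := le_antisymm hq.2 (hg (le_of_lt hq.1))
        simp only [mem_singleton_iff]
        rw [← hgy, h3]
      · exact Or.inl (by rw [← hgy]; exact hB')
      · exfalso
        rw [mem_singleton_iff] at hTT
        rw [hTT] at htIco
        exact absurd htIco.2 (lt_irrefl T)
    have h8 : volume (φ ⁻¹' (N ∩ Ico 0 T) ∩ I) ≤ volume (B ∪ ⋃ q : ℚ, {((g q:ℝ))}) :=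
      measure_mono hsub2
    have h7 : volume (B ∪ ⋃ q : ℚ, {((g q:ℝ))}) = 0 :=
      measure_union_null hBnull (measure_iUnion_null fun q => measure_singleton _)
    exact le_antisymm (h8.trans h7.le) zero_le
  have hNnull : μ N = 0 := by
    have hNsplit : N ⊆ (N ∩ Ico 0 T) ∪ ({T} \ D) := by
      intro x hx
      rcases lt_or_eq_of_le hx.1.1.2 with h | h
      · exact Or.inl ⟨hx, ⟨hx.1.1.1, h⟩⟩
      · exact Or.inr ⟨by simp [h], hx.1.2⟩
    have h9 : μ N ≤ μ (N ∩ Ico 0 T) + μ ({T} \ D) :=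
      (measure_mono hNsplit).trans (measure_union_le _ _)
    rw [hXnull, hTnull, add_zero] at h9
    exact le_antisymm h9 zero_le
  refine ⟨N, hNsub, hNmeas, hNnull, ?_⟩
  rintro t ⟨htIcc, htN⟩
  rw [HasDerivG]
  by_cases hj : g t < Function.rightLim g t
  · rw [if_pos hj]
    refine ⟨F t + (Function.rightLim g t - g t) • f t, ?_, ?_⟩
    · by_cases htT : t = T
      · have he : Icc (0:ℝ) T ∩ Ioi t = ∅ := by
          apply eq_empty_iff_forall_notMem.2
          rintro x ⟨hx1, hx2⟩
          rw [htT] at hx2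
          exact absurd hx2 (not_lt.2 hx1.2)
        rw [he, nhdsWithin_empty]
        exact tendsto_bot
      · have htT' : t < T := lt_of_le_of_ne htIcc.2 htT
        have hjval : (μ {t}).toReal = Function.rightLim g t - g t := by
          rw [hsingle t]
          exact ENNReal.toReal_ofReal (by linarith)
        have key : ∀ s ∈ Icc 0 T ∩ Ioi t, F s =
            (F t + (Function.rightLim g t - g t) • f t) + ∫ x in Ioo t s, f x ∂μ := by
          intro s hs
          rw [hF s hs.1, hF t htIcc]
          rw [show Ico (0:ℝ) s = Ico 0 t ∪ Ico t s from
            (Ico_union_Ico_eq_Ico htIcc.1 (le_of_lt hs.2)).symm]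
          rw [setIntegral_union Set.Ico_disjoint_Ico_same measurableSet_Ico
            (hf.mono_set (fun x hx => ⟨hx.1, hx.2.le.trans htIcc.2⟩))
            (hf.mono_set (fun x hx => ⟨htIcc.1.trans hx.1, hx.2.le.trans hs.1.2⟩))]
          rw [show Ico t s = {t} ∪ Ioo t s by
            rw [singleton_union, Ioo_insert_left hs.2]]
          rw [setIntegral_union (disjoint_singleton_left.mpr (by simp)) measurableSet_Ioo
            (hf.mono_set (fun x hx => by
              rw [mem_singleton_iff] at hx; rw [hx]; exact htIcc))
            (hf.mono_set (fun x hx => ⟨htIcc.1.trans hx.1.le, hx.2.le.trans hs.1.2⟩))]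
          rw [integral_singleton, measureReal_def, hjval]
          abel
        have htend : Tendsto (fun s =>
            (F t + (Function.rightLim g t - g t) • f t) + ∫ x in Ioo t s, f x ∂μ)
            (𝓝[Icc 0 T ∩ Ioi t] t)
            (𝓝 ((F t + (Function.rightLim g t - g t) • f t) + 0)) :=
          tendsto_const_nhds.add (hIoo t htIcc)
        rw [add_zero] at htend
        apply htend.congr'
        filter_upwards [self_mem_nhdsWithin] with s hs
        exact (key s hs).symm
    · rw [add_sub_cancel_left, smul_smul, inv_mul_cancel₀ (ne_of_gt (sub_pos.2 hj)), one_smul]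
  · rw [if_neg hj]
    have htD : t ∉ D := hj
    have hmem4 : t ∉ (Rset ∪ Lset ∪ g ⁻¹' B ∪ ({T} : Set ℝ)) := fun h => htN ⟨⟨htIcc, htD⟩, h⟩
    have hR : t ∉ Rset := fun h => hmem4 (Or.inl (Or.inl (Or.inl h)))
    have hL : t ∉ Lset := fun h => hmem4 (Or.inl (Or.inl (Or.inr h)))
    have hBt : g t ∉ B := fun h => hmem4 (Or.inl (Or.inr h))
    have hTne : t ≠ T := fun h => hmem4 (Or.inr (by rw [mem_singleton_iff]; exact h))
    have htT : t < T := lt_of_le_of_ne htIcc.2 hTne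
    have hrL : Function.rightLim g t = g t := le_antisymm (not_lt.1 hj) (hg.le_rightLim le_rfl)
    have hgt_right : ∀ s, t < s → g t < g s := by
      intro s hs
      by_contra hcon
      push_neg at hcon
      obtain ⟨q, hq1, hq2⟩ := exists_rat_btwn hs
      exact hR (mem_iUnion.mpr ⟨q, ⟨hq1, (hg hq2.le).trans hcon⟩⟩)
    have hgt_left : ∀ s, s < t → g s < g t := by
      intro s hs
      by_contra hcon
      push_neg at hcon
      obtain ⟨q, hq1, hq2⟩ := exists_rat_btwn hs
      exact hL (mem_iUnion.mpr ⟨q, ⟨hq2, hcon.trans (hg hq1.le)⟩⟩)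
    have hgtI : g t ∈ I := ⟨hg htIcc.1, hgt_right T htT⟩
    have hφgt : φ (g t) = t := by
      apply le_antisymm
      · by_contra hcon
        push_neg at hcon
        exact absurd (key_mem (g t) hgtI).2 (not_le.2 (hgt_right (φ (g t)) hcon))
      · exact (key_le t htIcc (g t) hgtI.1).mpr le_rfl
    have hf₁gt : f₁ (g t) = f t := by
      rw [hf₁def, indicator_of_mem hgtI, Function.comp_apply, hφgt]
    have hP : Tendsto (fun r => ⨍ z in Metric.closedBall (g t) r, ‖f₁ z - f₁ (g t)‖)
        (𝓝[>] (0:ℝ)) (𝓝 0) := by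
      by_contra h
      exact hBt (hBsub h)
    have hA := aux_A f₁ (g t) hP
    have hsplit : Icc 0 T \ {t} = (Icc 0 T ∩ Iio t) ∪ (Icc 0 T ∩ Ioi t) := by
      ext x
      simp only [mem_diff, mem_singleton_iff, mem_union, mem_inter_iff, mem_Iio, mem_Ioi]
      constructor
      · rintro ⟨hx1, hx2⟩
        rcases Ne.lt_or_gt hx2 with h | h
        · exact Or.inl ⟨hx1, h⟩
        · exact Or.inr ⟨hx1, h⟩
      · rintro (⟨hx1, hx2⟩ | ⟨hx1, hx2⟩)
        · exact ⟨hx1, hx2.ne⟩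
        · exact ⟨hx1, hx2.ne'⟩
    rw [hsplit, nhdsWithin_union, tendsto_sup]
    constructor
    · -- left limit
      have hrtend : Tendsto (fun s => g t - g s) (𝓝[Icc 0 T ∩ Iio t] t) (𝓝[>] (0:ℝ)) := by
        rw [tendsto_nhdsWithin_iff]
        constructor
        · have h1 : Tendsto g (𝓝[Icc 0 T ∩ Iio t] t) (𝓝 (g t)) :=
            (hlc t).mono_left (nhdsWithin_mono t inter_subset_right)
          have h2 := h1.const_sub (g t)
          simpa using h2
        · filter_upwards [self_mem_nhdsWithin] with s hs
          exact sub_pos.2 (hgt_left s hs.2)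
      have hcomp := hA.comp hrtend
      rw [← tendsto_sub_nhds_zero_iff]
      apply squeeze_zero_norm' _ hcomp
      filter_upwards [self_mem_nhdsWithin] with s hs
      have h0s : (0:ℝ) ≤ s := hs.1.1
      have hst : s < t := hs.2
      have hgs : g s < g t := hgt_left s hst
      have hr0 : (0:ℝ) < g t - g s := sub_pos.2 hgs
      have e1 : F s - F t = -∫ x in Ico s t, f x ∂μ := by
        rw [hF s hs.1, hF t htIcc]
        rw [show Ico (0:ℝ) t = Ico 0 s ∪ Ico s t from
          (Ico_union_Ico_eq_Ico h0s hst.le).symm]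
        rw [setIntegral_union Set.Ico_disjoint_Ico_same measurableSet_Ico
          (hf.mono_set (fun x hx => ⟨hx.1, hx.2.le.trans hs.1.2⟩))
          (hf.mono_set (fun x hx => ⟨h0s.trans hx.1, hx.2.le.trans htIcc.2⟩))]
        abel
      have e2 : ∫ x in Ico s t, f x ∂μ = ∫ x in Ico (g s) (g t), f₁ x :=
        htrans s t h0s hst.le htIcc.2
      have e3 : (g s - g t)⁻¹ • (F s - F t)
          = (g t - g s)⁻¹ • (∫ x in Ico (g s) (g t), f₁ x) := by
        rw [e1, e2, show g s - g t = -(g t - g s) by ring, inv_neg, neg_smul, smul_neg, neg_neg]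
      rw [e3]
      have e4 : (g t - g s)⁻¹ • (∫ x in Ico (g s) (g t), f₁ x) - f t
          = (g t - g s)⁻¹ • ((∫ x in Ico (g s) (g t), f₁ x) - (g t - g s) • f₁ (g t)) := by
        rw [smul_sub, smul_smul, inv_mul_cancel₀ hr0.ne', one_smul, hf₁gt]
      rw [e4, norm_smul, norm_inv, Real.norm_eq_abs, abs_of_pos hr0]
      have hsub5 : Ico (g s) (g t) ⊆ Metric.closedBall (g t) (g t - g s) := by
        rw [Real.closedBall_eq_Icc]
        intro x hx
        exact ⟨by linarith [hx.1], hx.2.le.trans (by linarith)⟩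
      have hest := aux_est f₁ hf₁int (g t) (g s) (g t) (g t - g s) hr0 (by ring) hsub5
      exact mul_le_mul_of_nonneg_left hest (inv_nonneg.2 hr0.le)
    · -- right limit
      have hrtend : Tendsto (fun s => g s - g t) (𝓝[Icc 0 T ∩ Ioi t] t) (𝓝[>] (0:ℝ)) := by
        rw [tendsto_nhdsWithin_iff]
        constructor
        · have h1 : Tendsto g (𝓝[Icc 0 T ∩ Ioi t] t) (𝓝 (g t)) := by
            have h2 : Tendsto g (𝓝[>] t) (𝓝 (g t)) := by
              have := hg.tendsto_rightLim t
              rwa [hrL] at this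
            exact h2.mono_left (nhdsWithin_mono t inter_subset_right)
          have h2 := h1.sub_const (g t)
          simpa using h2
        · filter_upwards [self_mem_nhdsWithin] with s hs
          exact sub_pos.2 (hgt_right s hs.2)
      have hcomp := hA.comp hrtend
      rw [← tendsto_sub_nhds_zero_iff]
      apply squeeze_zero_norm' _ hcomp
      filter_upwards [self_mem_nhdsWithin] with s hs
      have hts : t < s := hs.2
      have hgs : g t < g s := hgt_right s hts
      have hr0 : (0:ℝ) < g s - g t := sub_pos.2 hgs
      have e1 : F s - F t = ∫ x in Ico t s, f x ∂μ := by
        rw [hF s hs.1, hF t htIcc]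
        rw [show Ico (0:ℝ) s = Ico 0 t ∪ Ico t s from
          (Ico_union_Ico_eq_Ico htIcc.1 hts.le).symm]
        rw [setIntegral_union Set.Ico_disjoint_Ico_same measurableSet_Ico
          (hf.mono_set (fun x hx => ⟨hx.1, hx.2.le.trans htIcc.2⟩))
          (hf.mono_set (fun x hx => ⟨htIcc.1.trans hx.1, hx.2.le.trans hs.1.2⟩))]
        abel
      have e2 : ∫ x in Ico t s, f x ∂μ = ∫ x in Ico (g t) (g s), f₁ x :=
        htrans t s htIcc.1 hts.le hs.1.2
      have e4 : (g s - g t)⁻¹ • (F s - F t) - f t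
          = (g s - g t)⁻¹ • ((∫ x in Ico (g t) (g s), f₁ x) - (g s - g t) • f₁ (g t)) := by
        rw [e1, e2, smul_sub, smul_smul, inv_mul_cancel₀ hr0.ne', one_smul, hf₁gt]
      rw [e4, norm_smul, norm_inv, Real.norm_eq_abs, abs_of_pos hr0]
      have hsub5 : Ico (g t) (g s) ⊆ Metric.closedBall (g t) (g s - g t) := by
        rw [Real.closedBall_eq_Icc]
        intro x hx
        exact ⟨(by linarith : g t - (g s - g t) ≤ g t).trans hx.1, hx.2.le.trans (by linarith)⟩
      have hest := aux_est f₁ hf₁int (g t) (g t) (g s) (g s - g t) hr0 (by ring) hsub5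
      exact mul_le_mul_of_nonneg_left hest (inv_nonneg.2 hr0.le)
end

section
/- Let g: ℝ → ℝ be nondecreasing and left-continuous, V a real Banach space, and f: [0,T] → V a Bochner μ_g-integrable function. Define F(t) = ∫_{[0,t)} f dμ_g ∈ V. Then there exists a μ_g-measurable set N ⊆ [0,T] with μ_g(N) = 0 such that for all t ∈ [0,T] \ N the g-derivative F'_g(t) exists in V and F'_g(t) = f(t). -/
open MeasureTheory Filter Set Topology

section AuxLemmas

theorem aux_psi (g : ℝ → ℝ) (hg : Monotone g)
    (hlc : ∀ t : ℝ, ContinuousWithinAt g (Set.Iio t) t)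
    (T : ℝ) (hT : 0 ≤ T) :
    ∃ ψ : ℝ → ℝ, Monotone ψ ∧
      (∀ y, g 0 ≤ y → ψ y ∈ Icc 0 T) ∧
      (∀ y, g 0 ≤ y → g (ψ y) ≤ y) ∧
      (∀ y, g 0 ≤ y → ∀ x ∈ Icc 0 T, (x ≤ ψ y ↔ g x ≤ y)) ∧
      (∀ y, g 0 ≤ y → y < g T → ψ y < T) ∧
      (∀ t ∈ Icc 0 T, ∀ y, g t ≤ y → (∀ x ∈ Icc 0 T, t < x → y < g x) → ψ y = t) := by
  classical
  set S : ℝ → Set ℝ := fun y => {x | g x ≤ y} ∩ Icc 0 T with hS_def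
  set ψ : ℝ → ℝ := fun y => sSup (S y) with hψ_def
  have hSne : ∀ y, g 0 ≤ y → (S y).Nonempty := fun y hy => ⟨0, hy, le_rfl, hT⟩
  have hSbdd : ∀ y, BddAbove (S y) := fun y => BddAbove.mono inter_subset_right bddAbove_Icc
  have hψ_mem : ∀ y, g 0 ≤ y → ψ y ∈ Icc 0 T := by
    intro y hy
    exact ⟨le_csSup (hSbdd y) ⟨hy, le_rfl, hT⟩, csSup_le (hSne y hy) (fun x hx => hx.2.2)⟩
  have hψ_gle : ∀ y, g 0 ≤ y → g (ψ y) ≤ y := by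
    intro y hy
    have h1 : ∀ x ∈ Iio (ψ y), g x ≤ y := by
      intro x hx
      obtain ⟨s, hs, hxs⟩ := exists_lt_of_lt_csSup (hSne y hy) hx
      exact (hg hxs.le).trans hs.1
    exact le_of_tendsto (hlc (ψ y)) (eventually_nhdsWithin_of_forall h1)
  have hψ_galois : ∀ y, g 0 ≤ y → ∀ x ∈ Icc 0 T, (x ≤ ψ y ↔ g x ≤ y) := by
    intro y hy x hx
    exact ⟨fun h => (hg h).trans (hψ_gle y hy), fun h => le_csSup (hSbdd y) ⟨h, hx⟩⟩
  have hψ_mono : Monotone ψ := by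
    intro y₁ y₂ h12
    by_cases h1 : g 0 ≤ y₁
    · exact csSup_le (hSne y₁ h1) (fun x hx => le_csSup (hSbdd y₂) ⟨hx.1.trans h12, hx.2⟩)
    · have he : S y₁ = ∅ :=
        eq_empty_of_forall_notMem (fun x hx => h1 ((hg hx.2.1).trans hx.1))
      have e1 : ψ y₁ = 0 := by rw [hψ_def]; simp only [he, Real.sSup_empty]
      by_cases h2 : g 0 ≤ y₂
      · rw [e1]; exact (hψ_mem y₂ h2).1
      · have he2 : S y₂ = ∅ :=
          eq_empty_of_forall_notMem (fun x hx => h2 ((hg hx.2.1).trans hx.1))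
        have e2 : ψ y₂ = 0 := by rw [hψ_def]; simp only [he2, Real.sSup_empty]
        rw [e1, e2]
  refine ⟨ψ, hψ_mono, hψ_mem, hψ_gle, hψ_galois, ?_, ?_⟩
  · intro y hy hyT
    rcases lt_or_eq_of_le (hψ_mem y hy).2 with h | h
    · exact h
    · exact absurd (h ▸ hψ_gle y hy) (not_le.2 hyT)
  · intro t ht y hty hbig
    refine le_antisymm (csSup_le ⟨t, hty, ht⟩ ?_) (le_csSup (hSbdd y) ⟨hty, ht⟩)
    rintro x ⟨hgx, hx⟩
    by_contra hc
    push_neg at hc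
    exact absurd hgx (not_le.2 (hbig x hx hc))

theorem aux_map (g : ℝ → ℝ) (hg : Monotone g)
    (μ : Measure ℝ)
    (hμ : ∀ a b : ℝ, a ≤ b → μ (Set.Ico a b) = ENNReal.ofReal (g b - g a))
    (T : ℝ) (hT : 0 ≤ T) (ψ : ℝ → ℝ) (hψm : Measurable ψ)
    (hmem : ∀ y, g 0 ≤ y → ψ y ∈ Icc 0 T)
    (hgalois : ∀ y, g 0 ≤ y → ∀ x ∈ Icc 0 T, (x ≤ ψ y ↔ g x ≤ y))
    (hltT : ∀ y, g 0 ≤ y → y < g T → ψ y < T) :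
    μ.restrict (Ico 0 T) = Measure.map ψ (volume.restrict (Ico (g 0) (g T))) := by
  have hIco : ∀ u v : ℝ, μ (Ico u v) = ENNReal.ofReal (g v - g u) := by
    intro u v
    rcases le_or_gt u v with h | h
    · exact hμ u v h
    · rw [Ico_eq_empty (not_lt.2 h.le), measure_empty]
      exact (ENNReal.ofReal_eq_zero.2 (sub_nonpos.2 (hg h.le))).symm
  have hpre : ∀ a b : ℝ,
      ψ ⁻¹' (Ico a b) ∩ Ico (g 0) (g T) = Ico (g (a ⊔ 0)) (g (b ⊓ T)) ∩ Ico (g 0) (g T) := by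
    intro a b
    ext y
    simp only [mem_inter_iff, mem_preimage, mem_Ico]
    constructor
    · rintro ⟨⟨h1, h2⟩, hy1, hy2⟩
      refine ⟨⟨?_, ?_⟩, hy1, hy2⟩
      · by_cases haT : a ≤ T
        · exact (hgalois y hy1 _ ⟨le_sup_right, sup_le haT hT⟩).1
            (sup_le h1 (hmem y hy1).1)
        · exact absurd ((h1.trans (hmem y hy1).2)) haT
      · by_cases hb0 : 0 ≤ b
        · have hmin : b ⊓ T ∈ Icc 0 T := ⟨le_inf hb0 hT, inf_le_right⟩
          have hlt2 : ψ y < b ⊓ T := lt_inf_iff.2 ⟨h2, hltT y hy1 hy2⟩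
          by_contra hc
          push_neg at hc
          exact absurd ((hgalois y hy1 _ hmin).2 hc) (not_le.2 hlt2)
        · exact absurd (lt_of_lt_of_le h2 ((hmem y hy1).1.trans' (not_le.1 hb0).le))
            (lt_irrefl _)
    · rintro ⟨⟨h1, h2⟩, hy1, hy2⟩
      have haT : a ≤ T := by
        by_contra hc
        push_neg at hc
        have h3 : g T ≤ g (a ⊔ 0) := hg (hc.le.trans le_sup_left)
        exact absurd (h3.trans h1) (not_le.2 hy2)
      have hb0 : 0 ≤ b := by
        by_contra hc
        push_neg at hc
        exact absurd (lt_of_le_of_lt hy1 h2) (not_lt.2 (hg (inf_le_left.trans hc.le)))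
      have hsup : a ⊔ 0 ∈ Icc 0 T := ⟨le_sup_right, sup_le haT hT⟩
      have hmin : b ⊓ T ∈ Icc 0 T := ⟨le_inf hb0 hT, inf_le_right⟩
      refine ⟨⟨le_sup_left.trans ((hgalois y hy1 _ hsup).2 h1), ?_⟩, hy1, hy2⟩
      have hc2 : ¬ (b ⊓ T ≤ ψ y) := fun hc => absurd ((hgalois y hy1 _ hmin).1 hc) (not_le.2 h2)
      exact lt_of_lt_of_le (not_le.1 hc2) inf_le_left
  have hψIco : ∀ a b : ℝ, MeasurableSet (ψ ⁻¹' Ico a b) := fun a b => hψm measurableSet_Ico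
  haveI : IsFiniteMeasure (μ.restrict (Ico 0 T)) :=
    ⟨by rw [Measure.restrict_apply_univ, hμ 0 T hT]; exact ENNReal.ofReal_lt_top⟩
  apply Measure.ext_of_Ico_finite
  · rw [Measure.restrict_apply_univ, Measure.map_apply hψm MeasurableSet.univ,
      preimage_univ, Measure.restrict_apply_univ, Real.volume_Ico, hμ 0 T hT]
  · intro a b _
    rw [Measure.restrict_apply measurableSet_Ico, Ico_inter_Ico,
      Measure.map_apply hψm measurableSet_Ico,
      Measure.restrict_apply (hψIco a b), hpre a b, Ico_inter_Ico,
      sup_eq_left.2 (hg le_sup_right), inf_eq_left.2 (hg inf_le_right), Real.volume_Ico]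
    exact hIco _ _

theorem aux_F {V : Type*} [NormedAddCommGroup V] [NormedSpace ℝ V] [CompleteSpace V]
    (g : ℝ → ℝ) (hg : Monotone g) (μ : Measure ℝ)
    (T : ℝ) (ψ : ℝ → ℝ) (hψm : Measurable ψ)
    (hmem : ∀ y, g 0 ≤ y → ψ y ∈ Icc 0 T)
    (hgalois : ∀ y, g 0 ≤ y → ∀ x ∈ Icc 0 T, (x ≤ ψ y ↔ g x ≤ y))
    (hmap : μ.restrict (Ico 0 T) = Measure.map ψ (volume.restrict (Ico (g 0) (g T))))
    (f : ℝ → V) (hf : IntegrableOn f (Set.Icc 0 T) μ) :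
    Integrable ((Ico (g 0) (g T)).indicator (f ∘ ψ)) volume ∧
    ∀ t ∈ Icc 0 T, (∫ s in Ico 0 t, f s ∂μ)
      = ∫ y in Ico (g 0) (g t), (Ico (g 0) (g T)).indicator (f ∘ ψ) y := by
  set fh := (Ico (g 0) (g T)).indicator (f ∘ ψ) with hfh
  have hfI : IntegrableOn f (Ico 0 T) μ := hf.mono_set Ico_subset_Icc_self
  have hfmap : Integrable f (Measure.map ψ (volume.restrict (Ico (g 0) (g T)))) := by
    rw [← hmap]; exact hfI
  have hasm : AEStronglyMeasurable f (Measure.map ψ (volume.restrict (Ico (g 0) (g T)))) :=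
    hfmap.aestronglyMeasurable
  have hcomp : Integrable (f ∘ ψ) (volume.restrict (Ico (g 0) (g T))) :=
    (integrable_map_measure hasm hψm.aemeasurable).1 hfmap
  refine ⟨(integrable_indicator_iff measurableSet_Ico).2 hcomp, ?_⟩
  intro t ht
  have hpre0 : ψ ⁻¹' (Ico 0 t) ∩ Ico (g 0) (g T) = Ico (g 0) (g t) ∩ Ico (g 0) (g T) := by
    ext y
    simp only [mem_inter_iff, mem_preimage, mem_Ico]
    constructor
    · rintro ⟨⟨h1, h2⟩, hy1, hy2⟩
      refine ⟨⟨hy1, ?_⟩, hy1, hy2⟩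
      by_contra hc
      push_neg at hc
      exact absurd ((hgalois y hy1 t ht).2 hc) (not_le.2 h2)
    · rintro ⟨⟨h1, h2⟩, hy1, hy2⟩
      refine ⟨⟨(hmem y hy1).1, ?_⟩, hy1, hy2⟩
      by_contra hc
      push_neg at hc
      exact absurd ((hgalois y hy1 t ht).1 hc) (not_le.2 h2)
  have e1 : ∫ s in Ico 0 t, f s ∂μ = ∫ s, f s ∂(μ.restrict (Ico 0 T)).restrict (Ico 0 t) := by
    rw [Measure.restrict_restrict measurableSet_Ico,
      inter_eq_self_of_subset_left (Ico_subset_Ico le_rfl ht.2)]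
  rw [e1, hmap, Measure.restrict_map hψm measurableSet_Ico,
    integral_map hψm.aemeasurable (by
      rw [← Measure.restrict_map hψm measurableSet_Ico]; exact hasm.restrict),
    Measure.restrict_restrict (hψm measurableSet_Ico), hpre0,
    inter_eq_self_of_subset_left (Ico_subset_Ico_right (hg ht.2))]
  refine setIntegral_congr_fun measurableSet_Ico (fun y hy => ?_)
  have hymem : y ∈ Ico (g 0) (g T) := ⟨hy.1, hy.2.trans_le (hg ht.2)⟩
  show f (ψ y) = (Ico (g 0) (g T)).indicator (f ∘ ψ) y
  exact (indicator_of_mem hymem (f ∘ ψ)).symm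

theorem aux_key {V : Type*} [NormedAddCommGroup V] [NormedSpace ℝ V] [CompleteSpace V]
    (fh : ℝ → V) (hfh : Integrable fh volume) (y₀ : ℝ) (c : V) (u v : ℝ) (huv : u < v)
    (hsub : Ico u v ⊆ Metric.closedBall y₀ (v - u)) :
    ‖(v - u)⁻¹ • (∫ z in Ico u v, fh z) - c‖
      ≤ 2 * ⨍ z in Metric.closedBall y₀ (v - u), ‖fh z - c‖ := by
  set r := v - u with hr
  have hr0 : 0 < r := sub_pos.2 huv
  have hIvol : volume (Ico u v) = ENNReal.ofReal r := Real.volume_Ico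
  have hconst : IntegrableOn (fun _ => c) (Ico u v) volume :=
    integrableOn_const (by rw [hIvol]; exact ENNReal.ofReal_ne_top)
  have e1 : ∫ z in Ico u v, (fh z - c) = (∫ z in Ico u v, fh z) - r • c := by
    rw [integral_sub hfh.integrableOn hconst, setIntegral_const, measureReal_def, hIvol,
      ENNReal.toReal_ofReal hr0.le]
  have e2 : (v - u)⁻¹ • (∫ z in Ico u v, fh z) - c = r⁻¹ • ∫ z in Ico u v, (fh z - c) := by
    rw [e1, smul_sub, smul_smul, inv_mul_cancel₀ hr0.ne', one_smul]
  rw [e2, norm_smul]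
  have hnormball : IntegrableOn (fun z => ‖fh z - c‖) (Metric.closedBall y₀ r) volume :=
    (hfh.integrableOn.sub (integrableOn_const measure_closedBall_lt_top.ne)).norm
  have e3 : ‖∫ z in Ico u v, (fh z - c)‖ ≤ ∫ z in Metric.closedBall y₀ r, ‖fh z - c‖ := by
    refine (norm_integral_le_integral_norm _).trans ?_
    exact setIntegral_mono_set hnormball (Eventually.of_forall (fun z => norm_nonneg _))
      (HasSubset.Subset.eventuallyLE hsub)
  calc ‖r⁻¹‖ * ‖∫ z in Ico u v, (fh z - c)‖
      ≤ r⁻¹ * ∫ z in Metric.closedBall y₀ r, ‖fh z - c‖ := by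
        rw [Real.norm_eq_abs, abs_of_pos (inv_pos.2 hr0)]
        exact mul_le_mul_of_nonneg_left e3 (inv_pos.2 hr0).le
    _ = 2 * ⨍ z in Metric.closedBall y₀ r, ‖fh z - c‖ := by
        rw [setAverage_eq, measureReal_def, Real.volume_closedBall, ENNReal.toReal_ofReal (by linarith),
          smul_eq_mul]
        field_simp

theorem aux_leb {V : Type*} [NormedAddCommGroup V]
    (fh : ℝ → V) (hfh : Integrable fh volume) :
    ∀ᵐ y₀ ∂(volume : Measure ℝ), Tendsto
      (fun r => ⨍ z in Metric.closedBall y₀ r, ‖fh z - fh y₀‖) (𝓝[>] 0) (𝓝 0) := by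
  filter_upwards [IsUnifLocDoublingMeasure.ae_tendsto_average_norm_sub volume
    hfh.locallyIntegrable 1] with y₀ hy₀
  refine hy₀ (ι := ℝ) (l := 𝓝[>] (0:ℝ)) (fun _ => y₀) (fun r => r) tendsto_id ?_
  filter_upwards [self_mem_nhdsWithin] with r hr
  simp only [Metric.mem_closedBall, dist_self]
  have h0 : (0:ℝ) < r := hr
  linarith

end AuxLemmas

/-- Generalized Lebesgue differentiation theorem for Bochner `μ_g`-integrable
functions with values in a Banach space. -/
theorem stmt2
    {V : Type*} [NormedAddCommGroup V] [NormedSpace ℝ V] [CompleteSpace V]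
    (g : ℝ → ℝ) (hg : Monotone g)
    (hlc : ∀ t : ℝ, ContinuousWithinAt g (Set.Iio t) t)
    (μ : Measure ℝ)
    (hμ : ∀ a b : ℝ, a ≤ b → μ (Set.Ico a b) = ENNReal.ofReal (g b - g a))
    (T : ℝ) (hT : 0 ≤ T)
    (f : ℝ → V) (hf : IntegrableOn f (Set.Icc 0 T) μ)
    (F : ℝ → V) (hF : ∀ t ∈ Set.Icc 0 T, F t = ∫ s in Set.Ico 0 t, f s ∂μ) :
    ∃ N ⊆ Set.Icc 0 T, MeasurableSet N ∧ μ N = 0 ∧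
      ∀ t ∈ Set.Icc 0 T \ N, HasDerivG g (Set.Icc 0 T) F t (f t) := by
  classical
  obtain ⟨ψ, hψmono, hmem, hgle, hgalois, hltT, hgap⟩ := aux_psi g hg hlc T hT
  have hψm : Measurable ψ := hψmono.measurable
  have hmap := aux_map g hg μ hμ T hT ψ hψm hmem hgalois hltT
  obtain ⟨hfh_int, hFrep⟩ := aux_F g hg μ T ψ hψm hmem hgalois hmap f hf
  set fh := (Ico (g 0) (g T)).indicator (f ∘ ψ) with hfh_def
  have hg_le_rl : ∀ x, g x ≤ Function.rightLim g x := fun x => hg.le_rightLim le_rfl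
  have hgm : Measurable g := hg.measurable
  have hrl_mono : Monotone (Function.rightLim g) := by
    intro x y hxy
    rcases eq_or_lt_of_le hxy with rfl | h
    · exact le_rfl
    · exact (hg.rightLim_le (show x < (x+y)/2 by linarith)).trans
        (hg.le_rightLim (show (x+y)/2 ≤ y by linarith))
  have hrlm : Measurable (Function.rightLim g) := hrl_mono.measurable
  -- primitive
  set Hf : ℝ → V := fun y => ∫ z in (g 0)..y, fh z with hHf_def
  have hHcont : Continuous Hf :=
    intervalIntegral.continuous_primitive (fun a b => hfh_int.intervalIntegrable) (g 0)
  have hIcoInt : ∀ u v : ℝ, u ≤ v → ∫ z in Ico u v, fh z = ∫ z in u..v, fh z := by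
    intro u v huv
    rw [intervalIntegral.integral_of_le huv, integral_Ico_eq_integral_Ioo,
      integral_Ioc_eq_integral_Ioo]
  have hFH : ∀ s ∈ Icc 0 T, F s = Hf (g s) := by
    intro s hs
    rw [hF s hs, hFrep s hs, hIcoInt _ _ (hg hs.1)]
  have hdiff : ∀ t ∈ Icc 0 T, ∀ s ∈ Icc 0 T, t ≤ s →
      F s - F t = ∫ z in Ico (g t) (g s), fh z := by
    intro t ht s hs hts
    rw [hFH s hs, hFH t ht, hIcoInt _ _ (hg hts), hHf_def]
    show (∫ z in (g 0)..(g s), fh z) - (∫ z in (g 0)..(g t), fh z)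
        = ∫ z in (g t)..(g s), fh z
    rw [← intervalIntegral.integral_add_adjacent_intervals (a := g 0) (b := g t) (c := g s)
      hfh_int.intervalIntegrable hfh_int.intervalIntegrable, add_sub_cancel_left]
  -- singleton null at nonjump points
  have hsingle : ∀ t : ℝ, Function.rightLim g t ≤ g t → μ {t} = 0 := by
    intro t hrlt
    have hrleq : Function.rightLim g t = g t := le_antisymm hrlt (hg_le_rl t)
    have h2 : Tendsto g (𝓝[>] t) (𝓝 (g t)) := hrleq ▸ hg.tendsto_rightLim t
    have h3 : Tendsto (fun s => g s - g t) (𝓝[>] t) (𝓝 0) := by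
      simpa using h2.sub_const (g t)
    have h1 : Tendsto (fun s => ENNReal.ofReal (g s - g t)) (𝓝[>] t) (𝓝 0) := by
      simpa [Function.comp_def] using (ENNReal.continuous_ofReal.tendsto 0).comp h3
    refine le_antisymm ?_ (zero_le)
    refine ge_of_tendsto h1 ?_
    filter_upwards [self_mem_nhdsWithin] with s hs
    rw [← hμ t s (le_of_lt hs)]
    exact measure_mono (singleton_subset_iff.2 ⟨le_rfl, hs⟩)
  -- Lebesgue points
  have hbesi := aux_leb fh hfh_int
  set Ny := toMeasurable volume {y : ℝ | ¬ Tendsto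
    (fun r => ⨍ z in Metric.closedBall y r, ‖fh z - fh y‖) (𝓝[>] 0) (𝓝 0)} with hNy_def
  have hNy_meas : MeasurableSet Ny := measurableSet_toMeasurable _ _
  have hNy_null : volume Ny = 0 := by
    rw [hNy_def, measure_toMeasurable]
    exact ae_iff.1 hbesi
  have hNy_sub : {y : ℝ | ¬ Tendsto
      (fun r => ⨍ z in Metric.closedBall y r, ‖fh z - fh y‖) (𝓝[>] 0) (𝓝 0)} ⊆ Ny :=
    subset_toMeasurable _ _
  set FlatSet := ⋃ (q : ℚ), {s : ℝ | (q:ℝ) ∈ Icc (0:ℝ) T ∧ g s = g (q:ℝ) ∧ s ≠ (q:ℝ)}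
    with hFlat_def
  have hFlat_meas : MeasurableSet FlatSet := by
    refine MeasurableSet.iUnion (fun q => ?_)
    by_cases hq : (q:ℝ) ∈ Icc (0:ℝ) T
    · have he : {s : ℝ | (q:ℝ) ∈ Icc (0:ℝ) T ∧ g s = g (q:ℝ) ∧ s ≠ (q:ℝ)}
          = (g ⁻¹' {g (q:ℝ)}) ∩ ({((q:ℝ))} : Set ℝ)ᶜ := by
        ext s
        simp only [mem_setOf_eq, mem_inter_iff, mem_preimage, mem_singleton_iff, mem_compl_iff]
        tauto
      rw [he]
      exact (hgm (measurableSet_singleton _)).inter (measurableSet_singleton _).compl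
    · have he : {s : ℝ | (q:ℝ) ∈ Icc (0:ℝ) T ∧ g s = g (q:ℝ) ∧ s ≠ (q:ℝ)} = ∅ := by
        ext s; simp [hq]
      rw [he]
      exact MeasurableSet.empty
  set N := (Icc 0 T ∩ {t : ℝ | Function.rightLim g t ≤ g t}) ∩ (FlatSet ∪ g ⁻¹' Ny ∪ {T})
    with hN_def
  have hN_meas : MeasurableSet N :=
    ((measurableSet_Icc.inter (measurableSet_le hrlm hgm)).inter
      ((hFlat_meas.union (hgm hNy_meas)).union (measurableSet_singleton T)))
  have hN_sub : N ⊆ Icc 0 T := fun t ht => ht.1.1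
  have hN_null : μ N = 0 := by
    have hsub2 : ψ ⁻¹' (N ∩ Ico 0 T) ∩ Ico (g 0) (g T)
        ⊆ (g '' (range ((↑) : ℚ → ℝ))) ∪ Ny := by
      rintro y ⟨hpre, hy⟩
      obtain ⟨⟨⟨htA, hnj⟩, hcase⟩, htIco⟩ := hpre
      have htT : ψ y < T := htIco.2
      have hgty : g (ψ y) ≤ y := hgle y hy.1
      have hyle : y ≤ Function.rightLim g (ψ y) := by
        refine ge_of_tendsto (hg.tendsto_rightLim (ψ y)) ?_
        filter_upwards [Ioc_mem_nhdsGT_of_mem (⟨le_rfl, htT⟩ : ψ y ∈ Ico (ψ y) T)] with s hs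
        by_contra hc
        push_neg at hc
        exact absurd ((hgalois y hy.1 s ⟨htA.1.trans hs.1.le, hs.2⟩).2 hc.le) (not_le.2 hs.1)
      have hyeq : y = g (ψ y) := le_antisymm (hyle.trans hnj) hgty
      rcases hcase with (hflat | hny) | hTt
      · obtain ⟨q, hq⟩ := mem_iUnion.1 hflat
        exact Or.inl ⟨(q:ℝ), mem_range_self q, by rw [hyeq, hq.2.1]⟩
      · exact Or.inr (by rw [hyeq]; exact hny)
      · exact absurd (mem_singleton_iff.1 hTt) (ne_of_lt htT)
    have hmeasN' : MeasurableSet (N ∩ Ico 0 T) := hN_meas.inter measurableSet_Ico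
    have h1 : μ (N ∩ Ico 0 T) = 0 := by
      have e : μ (N ∩ Ico 0 T) = μ.restrict (Ico 0 T) (N ∩ Ico 0 T) := by
        rw [Measure.restrict_apply hmeasN',
          inter_eq_self_of_subset_left inter_subset_right]
      rw [e, hmap, Measure.map_apply hψm hmeasN', Measure.restrict_apply (hψm hmeasN')]
      refine measure_mono_null hsub2 ?_
      exact measure_union_null
        (Set.Countable.measure_zero ((countable_range _).image g) _) hNy_null
    have hsplit : N ⊆ (N ∩ Ico 0 T) ∪ (N ∩ {T}) := by
      intro t ht
      rcases lt_or_eq_of_le (hN_sub ht).2 with h | h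
      · exact Or.inl ⟨ht, (hN_sub ht).1, h⟩
      · exact Or.inr ⟨ht, h⟩
    refine le_antisymm ?_ (zero_le)
    refine (measure_mono hsplit).trans ((measure_union_le _ _).trans ?_)
    rw [h1, zero_add]
    by_cases hTN : T ∈ N
    · exact (measure_mono inter_subset_right).trans (le_of_eq (hsingle T hTN.1.2))
    · have he : N ∩ {T} = ∅ := by
        apply eq_empty_of_forall_notMem
        rintro x ⟨hx1, hx2⟩
        exact hTN (mem_singleton_iff.1 hx2 ▸ hx1)
      rw [he, measure_empty]
  refine ⟨N, hN_sub, hN_meas, hN_null, ?_⟩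
  rintro t ⟨htA, htN⟩
  unfold HasDerivG
  split_ifs with hjump
  · -- jump case
    rcases eq_or_lt_of_le htA.2 with hTeq | htT
    · refine ⟨F t + (Function.rightLim g t - g t) • f t, ?_, ?_⟩
      · have he : Icc 0 T ∩ Ioi t = ∅ := by
          apply eq_empty_of_forall_notMem
          rintro x ⟨hx1, hx2⟩
          exact absurd hx1.2 (not_le.2 (hTeq ▸ hx2))
        rw [he, nhdsWithin_empty]
        exact tendsto_bot
      · rw [add_sub_cancel_left, smul_smul,
          inv_mul_cancel₀ (sub_ne_zero.2 (ne_of_gt hjump)), one_smul]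
    · -- t < T
      set c := Function.rightLim g t with hc_def
      have hc1 : g t < c := hjump
      have hc2 : c ≤ g T := hg.rightLim_le htT
      have hgapval : ∀ y ∈ Ico (g t) c, fh y = f t := by
        intro y hy
        have hydom : y ∈ Ico (g 0) (g T) := ⟨(hg htA.1).trans hy.1, lt_of_lt_of_le hy.2 hc2⟩
        have hψy : ψ y = t := hgap t htA y hy.1
          (fun x hx hlt => lt_of_lt_of_le hy.2 (hg.rightLim_le hlt))
        show ((Ico (g 0) (g T)).indicator (f ∘ ψ)) y = f t
        rw [indicator_of_mem hydom]
        show f (ψ y) = f t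
        rw [hψy]
      have hintc : ∫ z in Ico (g t) c, fh z = (c - g t) • f t := by
        rw [setIntegral_congr_fun measurableSet_Ico hgapval, setIntegral_const,
          measureReal_def, Real.volume_Ico, ENNReal.toReal_ofReal (by linarith)]
      have hFp : Hf c = F t + (c - g t) • f t := by
        have e2 : Hf c = Hf (g t) + ∫ z in (g t)..c, fh z :=
          (intervalIntegral.integral_add_adjacent_intervals
            hfh_int.intervalIntegrable hfh_int.intervalIntegrable).symm
        rw [e2, ← hIcoInt _ _ hc1.le, hintc, ← hFH t htA]
      refine ⟨F t + (c - g t) • f t, ?_, ?_⟩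
      · have h1 : Tendsto g (𝓝[Icc 0 T ∩ Ioi t] t) (𝓝 c) :=
          (hg.tendsto_rightLim t).mono_left (nhdsWithin_mono t inter_subset_right)
        have h2 : Tendsto (fun s => Hf (g s)) (𝓝[Icc 0 T ∩ Ioi t] t) (𝓝 (Hf c)) :=
          (hHcont.tendsto c).comp h1
        rw [← hFp]
        refine Tendsto.congr' ?_ h2
        filter_upwards [eventually_mem_nhdsWithin] with s hs
        exact (hFH s hs.1).symm
      · rw [add_sub_cancel_left, smul_smul,
          inv_mul_cancel₀ (sub_ne_zero.2 (ne_of_gt hc1)), one_smul]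
  · -- nonjump case
    have hnj : Function.rightLim g t = g t := le_antisymm (not_lt.1 hjump) (hg_le_rl t)
    have hcase : t ∉ FlatSet ∪ g ⁻¹' Ny ∪ {T} := fun hc => htN ⟨⟨htA, le_of_eq hnj⟩, hc⟩
    have hflat : t ∉ FlatSet := fun h => hcase (Or.inl (Or.inl h))
    have hny : g t ∉ Ny := fun h => hcase (Or.inl (Or.inr h))
    have htT : t < T := lt_of_le_of_ne htA.2 (fun h => hcase (Or.inr (mem_singleton_iff.2 h)))
    have hne : ∀ s ∈ Icc 0 T, s ≠ t → g s ≠ g t := by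
      intro s hs hst heq
      apply hflat
      rcases lt_or_gt_of_ne hst with h | h
      · obtain ⟨q, hq1, hq2⟩ := exists_rat_btwn h
        refine mem_iUnion.2 ⟨q, ⟨hs.1.trans hq1.le, hq2.le.trans htA.2⟩, ?_, ne_of_gt hq2⟩
        have e1 : g s ≤ g (q:ℝ) := hg hq1.le
        have e2 : g (q:ℝ) ≤ g t := hg hq2.le
        rw [heq] at e1
        exact le_antisymm e1 e2
      · obtain ⟨q, hq1, hq2⟩ := exists_rat_btwn h
        refine mem_iUnion.2 ⟨q, ⟨htA.1.trans hq1.le, hq2.le.trans hs.2⟩, ?_, ne_of_lt hq1⟩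
        have e1 : g t ≤ g (q:ℝ) := hg hq1.le
        have e2 : g (q:ℝ) ≤ g s := hg hq2.le
        rw [heq] at e2
        exact le_antisymm e1 e2
    have hy₀dom : g t ∈ Ico (g 0) (g T) :=
      ⟨hg htA.1, lt_of_le_of_ne (hg htA.2)
        (fun h => hne T ⟨hT, le_rfl⟩ (ne_of_gt htT) h.symm)⟩
    have hψy₀ : ψ (g t) = t := hgap t htA (g t) le_rfl
      (fun x hx hlt => lt_of_le_of_ne (hg hlt.le)
        (fun h => hne x hx (ne_of_gt hlt) h.symm))
    have hfh0 : fh (g t) = f t := by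
      show ((Ico (g 0) (g T)).indicator (f ∘ ψ)) (g t) = f t
      rw [indicator_of_mem hy₀dom]
      show f (ψ (g t)) = f t
      rw [hψy₀]
    have hGt : Tendsto (fun r => ⨍ z in Metric.closedBall (g t) r, ‖fh z - fh (g t)‖)
        (𝓝[>] 0) (𝓝 0) := by
      by_contra h
      exact hny (hNy_sub h)
    have hcontg : ContinuousAt g t := by
      refine continuousAt_iff_continuous_left'_right'.2 ⟨hlc t, ?_⟩
      have h2 := hg.tendsto_rightLim t
      rw [hnj] at h2
      exact h2
    have habs : Tendsto (fun s => |g s - g t|) (𝓝[Icc 0 T \ {t}] t) (𝓝[>] 0) := by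
      rw [tendsto_nhdsWithin_iff]
      constructor
      · have h1 : Tendsto (fun s => |g s - g t|) (𝓝 t) (𝓝 |g t - g t|) :=
          (hcontg.sub continuousAt_const).abs
        simp only [sub_self, abs_zero] at h1
        exact h1.mono_left nhdsWithin_le_nhds
      · filter_upwards [eventually_mem_nhdsWithin] with s hs
        exact abs_pos.2 (sub_ne_zero.2 (hne s hs.1 hs.2))
    have hbound : ∀ s ∈ Icc 0 T, s ≠ t →
        ‖(g s - g t)⁻¹ • (F s - F t) - f t‖
          ≤ 2 * ⨍ z in Metric.closedBall (g t) (|g s - g t|), ‖fh z - fh (g t)‖ := by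
      intro s hs hst
      rcases lt_or_gt_of_ne hst with h | h
      · have hlt : g s < g t := lt_of_le_of_ne (hg h.le) (hne s hs hst)
        have habs2 : |g s - g t| = g t - g s := by
          rw [abs_sub_comm, abs_of_pos (sub_pos.2 hlt)]
        have hq : (g s - g t)⁻¹ • (F s - F t) = (g t - g s)⁻¹ • (F t - F s) := by
          rw [show g s - g t = -(g t - g s) by ring, show F s - F t = -(F t - F s) by abel,
            inv_neg, neg_smul_neg]
        rw [hq, habs2, hdiff s hs t htA h.le, hfh0]
        exact aux_key fh hfh_int (g t) (f t) (g s) (g t) hlt (fun z hz => by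
          rw [Metric.mem_closedBall, Real.dist_eq,
            abs_of_nonpos (by linarith [hz.2] : z - g t ≤ 0)]
          linarith [hz.1])
      · have hlt : g t < g s := lt_of_le_of_ne (hg h.le) (fun hh => hne s hs hst hh.symm)
        have habs2 : |g s - g t| = g s - g t := abs_of_pos (sub_pos.2 hlt)
        rw [habs2, hdiff t htA s hs h.le, hfh0]
        exact aux_key fh hfh_int (g t) (f t) (g t) (g s) hlt (fun z hz => by
          rw [Metric.mem_closedBall, Real.dist_eq,
            abs_of_nonneg (by linarith [hz.1] : (0:ℝ) ≤ z - g t)]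
          linarith [hz.2])
    rw [tendsto_iff_norm_sub_tendsto_zero]
    refine squeeze_zero'
      (g := fun s => 2 * ⨍ z in Metric.closedBall (g t) (|g s - g t|), ‖fh z - fh (g t)‖)
      (Eventually.of_forall (fun s => norm_nonneg _)) ?_ ?_
    · filter_upwards [eventually_mem_nhdsWithin] with s hs
      exact hbound s hs.1 hs.2
    · have h2 : Tendsto
          (fun s => (2:ℝ) * ⨍ z in Metric.closedBall (g t) (|g s - g t|), ‖fh z - fh (g t)‖)
          (𝓝[Icc 0 T \ {t}] t) (𝓝 (2 * 0)) := (hGt.comp habs).const_mul 2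
      simpa using h2
end

section
/- Let V be a real reflexive separable Banach space continuously and densely embedded in a Hilbert space H (identified with its dual), so V ⊆ H ⊆ V'. Let 1 ≤ p, q ≤ ∞ and u ∈ W̃^{1,p,q}_g([0,T], V, V'), i.e., u ∈ L^p_g([0,T], V) and there exists ũ ∈ L^q_g([0,T], V') with u(t) = u(0) + ∫_{[0,t)} ũ dμ_g in V' for all t ∈ [0,T]. Then ũ is unique up to a μ_g-null set, and moreover ũ(t) = u'_g(t) for μ_g-a.e. t ∈ [0,T]. -/
open MeasureTheory Filter Set ENNReal
open scoped Topology

lemma aux_null_left (μ : Measure ℝ) (r : ℝ) : μ {x | r < x ∧ μ (Icc r x) = 0} = 0 := by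
  set B := {x | r < x ∧ μ (Icc r x) = 0} with hB
  rcases B.eq_empty_or_nonempty with h | hne
  · simp [h]
  by_cases hbd : BddAbove B
  · obtain ⟨u, hu_mono, hu_tend, hu_mem⟩ := exists_seq_tendsto_sSup hne hbd
    have hcover : B ⊆ (⋃ n, Icc r (u n)) ∪ ({sSup B} ∩ B) := by
      intro x hx
      by_cases hex : ∃ n, x ≤ u n
      · obtain ⟨n, hn⟩ := hex
        exact Or.inl (mem_iUnion.2 ⟨n, hx.1.le, hn⟩)
      · push_neg at hex
        have hle : x ≤ sSup B := le_csSup hbd hx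
        have hge : sSup B ≤ x := le_of_tendsto hu_tend (Eventually.of_forall fun n => (hex n).le)
        exact Or.inr ⟨mem_singleton_iff.2 (le_antisymm hle hge), hx⟩
    refine measure_mono_null hcover (measure_union_null (measure_iUnion_null fun n => (hu_mem n).2) ?_)
    by_cases hs : sSup B ∈ B
    · refine measure_mono_null (fun y hy => ?_) hs.2
      rcases hy with ⟨hy1, hy2⟩
      rw [mem_singleton_iff] at hy1
      exact ⟨hy2.1.le, hy1.le⟩
    · have : {sSup B} ∩ B = (∅ : Set ℝ) := by
        ext y; simp only [mem_inter_iff, mem_singleton_iff, mem_empty_iff_false, iff_false,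
          not_and]
        rintro rfl; exact hs
      simp [this]
  · have hex : ∀ n : ℕ, ∃ x ∈ B, (n : ℝ) < x := by
      intro n; by_contra h; push_neg at h
      exact hbd ⟨n, fun x hx => h x hx⟩
    choose u hu hun using hex
    have hcover : B ⊆ ⋃ n, Icc r (u n) := by
      intro x hx
      obtain ⟨n, hn⟩ := exists_nat_gt x
      exact mem_iUnion.2 ⟨n, hx.1.le, le_trans hn.le (hun n).le⟩
    exact measure_mono_null hcover (measure_iUnion_null fun n => (hu n).2)

lemma aux_null_right (μ : Measure ℝ) (r : ℝ) : μ {x | x < r ∧ μ (Ico x r) = 0} = 0 := by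
  set B := {x | x < r ∧ μ (Ico x r) = 0} with hB
  rcases B.eq_empty_or_nonempty with h | hne
  · simp [h]
  by_cases hbd : BddBelow B
  · obtain ⟨u, hu_mono, hu_tend, hu_mem⟩ := exists_seq_tendsto_sInf hne hbd
    have hcover : B ⊆ (⋃ n, Ico (u n) r) ∪ ({sInf B} ∩ B) := by
      intro x hx
      by_cases hex : ∃ n, u n ≤ x
      · obtain ⟨n, hn⟩ := hex
        exact Or.inl (mem_iUnion.2 ⟨n, hn, hx.1⟩)
      · push_neg at hex
        have hge : sInf B ≤ x := csInf_le hbd hx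
        have hle : x ≤ sInf B := ge_of_tendsto hu_tend (Eventually.of_forall fun n => (hex n).le)
        exact Or.inr ⟨mem_singleton_iff.2 (le_antisymm hle hge), hx⟩
    refine measure_mono_null hcover (measure_union_null (measure_iUnion_null fun n => (hu_mem n).2) ?_)
    by_cases hs : sInf B ∈ B
    · refine measure_mono_null (fun y hy => ?_) hs.2
      rcases hy with ⟨hy1, hy2⟩
      rw [mem_singleton_iff] at hy1
      exact ⟨hy1.ge, hy2.1⟩
    · have : {sInf B} ∩ B = (∅ : Set ℝ) := by
        ext y; simp only [mem_inter_iff, mem_singleton_iff, mem_empty_iff_false, iff_false,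
          not_and]
        rintro rfl; exact hs
      simp [this]
  · have hex : ∀ n : ℕ, ∃ x ∈ B, x < -(n : ℝ) := by
      intro n; by_contra h; push_neg at h
      exact hbd ⟨-(n : ℝ), fun x hx => h x hx⟩
    choose u hu hun using hex
    have hcover : B ⊆ ⋃ n, Ico (u n) r := by
      intro x hx
      obtain ⟨n, hn⟩ := exists_nat_gt (-x)
      refine mem_iUnion.2 ⟨n, le_of_lt (lt_of_lt_of_le (hun n) (by linarith)), hx.1⟩
    exact measure_mono_null hcover (measure_iUnion_null fun n => (hu n).2)

variable {g : ℝ → ℝ} {μ : Measure ℝ}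

lemma aux_seq_tendsto (t : ℝ) : Tendsto (fun n : ℕ => t + 1/(n+1)) atTop (𝓝[>] t) := by
  apply tendsto_nhdsWithin_of_tendsto_nhds_of_eventually_within
  · have h0 : Tendsto (fun n : ℕ => 1/((n:ℝ)+1)) atTop (𝓝 0) := tendsto_one_div_add_atTop_nhds_zero_nat
    have := h0.const_add t
    simpa using this
  · filter_upwards with n
    have : (0:ℝ) < 1/((n:ℝ)+1) := by positivity
    simp only [mem_Ioi]; linarith

lemma aux_singleton (hg : Monotone g)
    (hμ : ∀ a b : ℝ, a ≤ b → μ (Ico a b) = ENNReal.ofReal (g b - g a)) (t : ℝ) :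
    μ {t} = ENNReal.ofReal (Function.rightLim g t - g t) := by
  have hset : ⋂ n : ℕ, Ico t (t + 1/(n+1)) = {t} := by
    ext x
    simp only [mem_iInter, mem_Ico, mem_singleton_iff]
    constructor
    · intro h
      have h0 := (h 0).1
      rcases eq_or_lt_of_le h0 with h' | h'
      · exact h'.symm
      · exfalso
        obtain ⟨n, hn⟩ := exists_nat_one_div_lt (show (0:ℝ) < x - t by linarith)
        have := (h n).2
        have : x - t < 1/((n:ℝ)+1) := by linarith
        linarith [hn]
    · rintro rfl
      refine fun n => ⟨le_refl _, ?_⟩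
      have : (0:ℝ) < 1/((n:ℝ)+1) := by positivity
      linarith
  have h1 : Tendsto (fun n : ℕ => μ (Ico t (t + 1/(n+1)))) atTop (𝓝 (μ {t})) := by
    have := tendsto_measure_iInter_atTop (μ := μ)
      (s := fun n : ℕ => Ico t (t + 1/(n+1)))
      (fun n => (measurableSet_Ico).nullMeasurableSet)
      (fun n m hnm => Ico_subset_Ico_right (by
        have : 1/((m:ℝ)+1) ≤ 1/((n:ℝ)+1) := by
          apply one_div_le_one_div_of_le (by positivity)
          exact_mod_cast by exact_mod_cast add_le_add_left (Nat.cast_le.2 hnm) 1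
        linarith))
      ⟨0, by rw [show ((0:ℕ):ℝ) + 1 = 1 by norm_num, hμ t (t+1/1) (by norm_num)]; exact ofReal_ne_top⟩
    rwa [hset] at this
  have h2 : Tendsto (fun n : ℕ => μ (Ico t (t + 1/(n+1)))) atTop
      (𝓝 (ENNReal.ofReal (Function.rightLim g t - g t))) := by
    have hgt : Tendsto (fun n : ℕ => g (t + 1/(n+1))) atTop (𝓝 (Function.rightLim g t)) :=
      (hg.tendsto_rightLim t).comp (aux_seq_tendsto t)
    have : Tendsto (fun n : ℕ => ENNReal.ofReal (g (t + 1/(n+1)) - g t)) atTop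
        (𝓝 (ENNReal.ofReal (Function.rightLim g t - g t))) :=
      (ENNReal.continuous_ofReal.tendsto _).comp (hgt.sub_const (g t))
    refine this.congr fun n => ?_
    have hn : (0:ℝ) < 1/((n:ℝ)+1) := by positivity
    rw [hμ t (t + 1/(n+1)) (by linarith)]
  exact tendsto_nhds_unique h1 h2

lemma aux_contAt (hg : Monotone g) (hlc : ∀ t : ℝ, ContinuousWithinAt g (Set.Iio t) t)
    {t : ℝ} (h : ¬ g t < Function.rightLim g t) : ContinuousAt g t := by
  have hl : Function.leftLim g t = g t := (hg.continuousWithinAt_Iio_iff_leftLim_eq).1 (hlc t)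
  have hr : Function.rightLim g t = g t := le_antisymm (not_lt.1 h) (hg.le_rightLim (le_refl t))
  exact hg.continuousAt_iff_leftLim_eq_rightLim.2 (hl.trans hr.symm)

noncomputable def phi (g : ℝ → ℝ) (T : ℝ) (y : ℝ) : ℝ :=
  sSup ({0} ∪ {t | t ∈ Icc 0 T ∧ g t ≤ y})

section phi
variable {g : ℝ → ℝ} {T : ℝ}

lemma phi_bddAbove (hT : 0 ≤ T) (y : ℝ) : BddAbove ({0} ∪ {t | t ∈ Icc 0 T ∧ g t ≤ y}) := by
  refine ⟨T, fun x hx => ?_⟩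
  rcases hx with hx | hx
  · rw [mem_singleton_iff] at hx; rw [hx]; exact hT
  · exact hx.1.2

lemma phi_mem (hT : 0 ≤ T) (y : ℝ) : phi g T y ∈ Icc 0 T := by
  constructor
  · exact le_csSup (phi_bddAbove hT y) (Or.inl rfl)
  · refine csSup_le ⟨0, Or.inl rfl⟩ fun x hx => ?_
    rcases hx with hx | hx
    · rw [mem_singleton_iff] at hx; rw [hx]; exact hT
    · exact hx.1.2

lemma le_phi_iff (hg : Monotone g) (hlc : ∀ t : ℝ, ContinuousWithinAt g (Set.Iio t) t)
    (hT : 0 ≤ T) {t y : ℝ} (ht : t ∈ Icc 0 T) (hy : g 0 ≤ y) :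
    t ≤ phi g T y ↔ g t ≤ y := by
  constructor
  · intro h
    rcases eq_or_lt_of_le ht.1 with h0 | h0
    · rw [← h0]; exact hy
    have key : ∀ s ∈ Ico (0:ℝ) t, g s ≤ y := by
      intro s hs
      have hSne : (({0} ∪ {t | t ∈ Icc 0 T ∧ g t ≤ y}) : Set ℝ).Nonempty := ⟨0, Or.inl rfl⟩
      obtain ⟨x, hx, hsx⟩ := exists_lt_of_lt_csSup hSne (lt_of_lt_of_le hs.2 h)
      rcases hx with hx | hx
      · rw [mem_singleton_iff] at hx; rw [hx] at hsx; linarith [hs.1]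
      · exact le_trans (hg hsx.le) hx.2
    have hmem : Ico (0:ℝ) t ∈ 𝓝[Iio t] t := by
      refine mem_nhdsWithin.2 ⟨Ioi (0:ℝ), isOpen_Ioi, h0, ?_⟩
      rintro s ⟨hs1, hs2⟩
      exact ⟨le_of_lt hs1, hs2⟩
    exact le_of_tendsto (hlc t) (eventually_of_mem hmem key)
  · intro h
    exact le_csSup (phi_bddAbove hT y) (Or.inr ⟨ht, h⟩)

lemma phi_monotone (hT : 0 ≤ T) : Monotone (phi g T) := by
  intro y y' hyy
  have hSne : (({0} ∪ {t | t ∈ Icc 0 T ∧ g t ≤ y}) : Set ℝ).Nonempty := ⟨0, Or.inl rfl⟩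
  refine csSup_le_csSup (phi_bddAbove hT y') hSne ?_
  rintro x (hx | hx)
  · exact Or.inl hx
  · exact Or.inr ⟨hx.1, le_trans hx.2 hyy⟩

lemma phi_lt_iff (hg : Monotone g) (hlc : ∀ t : ℝ, ContinuousWithinAt g (Set.Iio t) t)
    (hT : 0 ≤ T) {t y : ℝ} (ht : t ∈ Icc 0 T) (hy : g 0 ≤ y) :
    phi g T y < t ↔ y < g t := by
  rw [← not_le, ← not_le, not_iff_not]
  exact le_phi_iff hg hlc hT ht hy

lemma g_phi_le (hg : Monotone g) (hlc : ∀ t : ℝ, ContinuousWithinAt g (Set.Iio t) t)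
    (hT : 0 ≤ T) {y : ℝ} (hy : g 0 ≤ y) : g (phi g T y) ≤ y :=
  (le_phi_iff hg hlc hT (phi_mem hT y) hy).1 (le_refl _)

lemma phi_preimage_Ico (hg : Monotone g) (hlc : ∀ t : ℝ, ContinuousWithinAt g (Set.Iio t) t)
    (hT : 0 ≤ T) {t s : ℝ} (ht : t ∈ Icc 0 T) (hs : s ∈ Icc 0 T) :
    phi g T ⁻¹' (Ico t s) ∩ Ico (g 0) (g T) = Ico (g t) (g s) := by
  ext y
  simp only [mem_inter_iff, mem_preimage, mem_Ico]
  constructor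
  · rintro ⟨⟨h1, h2⟩, hy1, hy2⟩
    exact ⟨(le_phi_iff hg hlc hT ht hy1).1 h1, (phi_lt_iff hg hlc hT hs hy1).1 h2⟩
  · rintro ⟨h1, h2⟩
    have hy1 : g 0 ≤ y := le_trans (hg ht.1) h1
    have hy2 : y < g T := lt_of_lt_of_le h2 (hg hs.2)
    exact ⟨⟨(le_phi_iff hg hlc hT ht hy1).2 h1, (phi_lt_iff hg hlc hT hs hy1).2 h2⟩, hy1, hy2⟩

lemma phi_measurable (hT : 0 ≤ T) : Measurable (phi g T) :=
  (phi_monotone hT).measurable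

end phi

section mapmeas
variable {g : ℝ → ℝ} {μ : Measure ℝ} {T : ℝ}

lemma map_phi_eq (hg : Monotone g) (hlc : ∀ t : ℝ, ContinuousWithinAt g (Set.Iio t) t)
    (hμ : ∀ a b : ℝ, a ≤ b → μ (Ico a b) = ENNReal.ofReal (g b - g a)) (hT : 0 ≤ T) :
    Measure.map (phi g T) (volume.restrict (Ico (g 0) (g T))) = μ.restrict (Ico 0 T) := by
  have hφ : Measurable (phi g T) := phi_measurable hT
  have hJ : MeasurableSet (Ico (g 0) (g T)) := measurableSet_Ico
  haveI : IsFiniteMeasure (Measure.map (phi g T) (volume.restrict (Ico (g 0) (g T)))) := by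
    constructor
    rw [Measure.map_apply hφ MeasurableSet.univ, preimage_univ, Measure.restrict_apply_univ,
      Real.volume_Ico]
    exact ofReal_lt_top
  refine Measure.ext_of_Ico _ _ (fun a b hab => ?_)
  rw [Measure.map_apply hφ measurableSet_Ico, Measure.restrict_apply (hφ measurableSet_Ico),
    Measure.restrict_apply measurableSet_Ico]
  by_cases hb : b ≤ 0
  · have h1 : phi g T ⁻¹' (Ico a b) ∩ Ico (g 0) (g T) = ∅ := by
      ext y; simp only [mem_inter_iff, mem_preimage, mem_Ico, mem_empty_iff_false, iff_false]
      rintro ⟨⟨h1, h2⟩, -⟩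
      exact absurd (lt_of_le_of_lt (phi_mem hT y).1 h2) (by linarith)
    have h2 : Ico a b ∩ Ico 0 T = ∅ := by
      ext x; simp only [mem_inter_iff, mem_Ico, mem_empty_iff_false, iff_false]
      rintro ⟨⟨-, h2⟩, h3, -⟩; linarith
    rw [h1, h2]; simp
  by_cases ha : T < a
  · have h1 : phi g T ⁻¹' (Ico a b) ∩ Ico (g 0) (g T) = ∅ := by
      ext y; simp only [mem_inter_iff, mem_preimage, mem_Ico, mem_empty_iff_false, iff_false]
      rintro ⟨⟨h1, -⟩, -⟩
      exact absurd (le_trans h1 (phi_mem hT y).2) (by linarith)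
    have h2 : Ico a b ∩ Ico 0 T = ∅ := by
      ext x; simp only [mem_inter_iff, mem_Ico, mem_empty_iff_false, iff_false]
      rintro ⟨⟨h1, -⟩, -, h4⟩; linarith
    rw [h1, h2]; simp
  push_neg at hb ha
  set a' := max a 0 with ha'
  set b' := min b T with hb'
  have ha'mem : a' ∈ Icc 0 T := ⟨le_max_right _ _, max_le ha hT⟩
  have hb'mem : b' ∈ Icc 0 T := ⟨le_min hb.le hT, min_le_right _ _⟩
  have h1 : phi g T ⁻¹' (Ico a b) ∩ Ico (g 0) (g T)
      = phi g T ⁻¹' (Ico a' b') ∩ Ico (g 0) (g T) := by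
    ext y
    simp only [mem_inter_iff, mem_preimage, mem_Ico, and_congr_left_iff]
    intro hy
    have hy0 : (0:ℝ) ≤ phi g T y := (phi_mem hT y).1
    have hyT : phi g T y < T := (phi_lt_iff hg hlc hT ⟨hT, le_refl T⟩ hy.1).2 hy.2
    constructor
    · rintro ⟨u1, u2⟩; exact ⟨max_le u1 hy0, lt_min u2 hyT⟩
    · rintro ⟨u1, u2⟩; exact ⟨le_trans (le_max_left _ _) u1, lt_of_lt_of_le u2 (min_le_left _ _)⟩
  rw [h1, phi_preimage_Ico hg hlc hT ha'mem hb'mem, Ico_inter_Ico, Real.volume_Ico]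
  have h2 : max a 0 = a' := rfl
  have h3 : min b T = b' := rfl
  rw [h2, h3]
  rcases le_or_gt a' b' with hab' | hab'
  · rw [hμ a' b' hab']
  · rw [Ico_eq_empty (not_lt.2 hab'.le), measure_empty]
    rw [ofReal_eq_zero.2 (by linarith [hg hab'.le] : g b' - g a' ≤ 0)]
end mapmeas
section chg
variable {g : ℝ → ℝ} {μ : Measure ℝ} {T : ℝ}
variable {E : Type*} [NormedAddCommGroup E] [NormedSpace ℝ E] [CompleteSpace E]

lemma setIntegral_phi (hg : Monotone g) (hlc : ∀ t : ℝ, ContinuousWithinAt g (Set.Iio t) t)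
    (hμ : ∀ a b : ℝ, a ≤ b → μ (Ico a b) = ENNReal.ofReal (g b - g a)) (hT : 0 ≤ T)
    (ut : ℝ → E) (hm : AEStronglyMeasurable ut (μ.restrict (Ico 0 T)))
    {t s : ℝ} (ht : t ∈ Icc 0 T) (hs : s ∈ Icc 0 T) :
    ∫ x in Ico t s, ut x ∂μ = ∫ y in Ico (g t) (g s), ut (phi g T y) ∂volume := by
  have hmap := map_phi_eq hg hlc hμ hT
  have hφ : Measurable (phi g T) := phi_measurable hT
  have hsub : Ico t s ⊆ Ico 0 T := fun x hx => ⟨le_trans ht.1 hx.1, lt_of_lt_of_le hx.2 hs.2⟩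
  have h1 : ∫ x in Ico t s, ut x ∂μ = ∫ x in Ico t s, ut x ∂(μ.restrict (Ico 0 T)) := by
    rw [Measure.restrict_restrict measurableSet_Ico, inter_eq_self_of_subset_left hsub]
  rw [h1, ← hmap, setIntegral_map measurableSet_Ico (by rw [hmap]; exact hm) hφ.aemeasurable,
    Measure.restrict_restrict (hφ measurableSet_Ico), phi_preimage_Ico hg hlc hT ht hs]

lemma key_est (h : ℝ → E) (hint : Integrable h volume) {a b : ℝ} (hab : a < b) (w : E) :
    ‖(b - a)⁻¹ • (∫ z in Ico a b, h z ∂volume) - w‖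
      ≤ ⨍ z in Icc a b, ‖h z - w‖ ∂volume := by
  set c := b - a with hc
  have hc0 : 0 < c := sub_pos.2 hab
  have hvol : (volume (Icc a b)).toReal = c := by
    rw [Real.volume_Icc, ENNReal.toReal_ofReal hc0.le]
  have h1 : ∫ z in Ico a b, h z ∂volume = ∫ z in Icc a b, h z ∂volume :=
    setIntegral_congr_set Ico_ae_eq_Icc
  have hconst : Integrable (fun _ : ℝ => w) (volume.restrict (Icc a b)) := by
    refine integrableOn_const ?_ ?_
    · rw [Real.volume_Icc]; exact ofReal_ne_top
    · exact enorm_ne_top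
  have h2 : (c)⁻¹ • (∫ z in Ico a b, h z ∂volume) - w
      = c⁻¹ • ∫ z in Icc a b, (h z - w) ∂volume := by
    rw [integral_sub hint.integrableOn hconst, h1, setIntegral_const, measureReal_def, hvol, smul_sub,
      smul_smul, inv_mul_cancel₀ hc0.ne', one_smul]
  rw [h2, setAverage_eq, measureReal_def, hvol, norm_smul, norm_inv, Real.norm_of_nonneg hc0.le, smul_eq_mul]
  gcongr
  exact norm_integral_le_integral_norm _

end chg


/-- The embedding `V ⊆ H ≡ H' ⊆ V'` of a Gelfand triple: `v` is sent to the
functional `w ↦ ⟪j v, j w⟫_H` on `V`. -/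
noncomputable def gelfandEmb {V H : Type*} [NormedAddCommGroup V] [NormedSpace ℝ V]
    [NormedAddCommGroup H] [InnerProductSpace ℝ H] [CompleteSpace H]
    (j : V →L[ℝ] H) : V → StrongDual ℝ V :=
  fun v => ((InnerProductSpace.toDual ℝ H (j v)) : H →L[ℝ] ℝ).comp j

/-- For `u` in the Stieltjes–Sobolev–Bochner space `W̃¹⁽ᵖ'ᑫ⁾_g([0,T],V,V')`, the
function `ũ` in the integral representation is unique up to a `μ_g`-null set, and it
coincides `μ_g`-a.e. with the `g`-derivative of `u` (seen in `V'`). -/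
theorem stmt4
    {V H : Type*} [NormedAddCommGroup V] [NormedSpace ℝ V] [CompleteSpace V]
    [TopologicalSpace.SeparableSpace V]
    [NormedAddCommGroup H] [InnerProductSpace ℝ H] [CompleteSpace H]
    (hVrefl : Function.Bijective (NormedSpace.inclusionInDoubleDual ℝ V))
    (j : V →L[ℝ] H) (hj : Function.Injective j) (hjd : DenseRange j)
    (g : ℝ → ℝ) (hg : Monotone g)
    (hlc : ∀ t : ℝ, ContinuousWithinAt g (Set.Iio t) t)
    (μ : Measure ℝ)
    (hμ : ∀ a b : ℝ, a ≤ b → μ (Set.Ico a b) = ENNReal.ofReal (g b - g a))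
    (T : ℝ) (hT : 0 ≤ T)
    (p q : ℝ≥0∞) (hp : 1 ≤ p) (hq : 1 ≤ q)
    (u : ℝ → V) (hu : MemLp u p (μ.restrict (Set.Ico 0 T)))
    (ut : ℝ → StrongDual ℝ V)
    (hut : MemLp ut q (μ.restrict (Set.Ico 0 T)))
    (hrep : ∀ t ∈ Set.Icc 0 T,
      gelfandEmb j (u t) = gelfandEmb j (u 0) + ∫ s in Set.Ico 0 t, ut s ∂μ) :
    (∀ ut₂ : ℝ → StrongDual ℝ V,
        MemLp ut₂ q (μ.restrict (Set.Ico 0 T)) →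
        (∀ t ∈ Set.Icc 0 T,
          gelfandEmb j (u t) = gelfandEmb j (u 0) + ∫ s in Set.Ico 0 t, ut₂ s ∂μ) →
        ut =ᵐ[μ.restrict (Set.Ico 0 T)] ut₂) ∧
      (∀ᵐ t ∂μ.restrict (Set.Ico 0 T),
        HasDerivG g (Set.Icc 0 T) (fun s => gelfandEmb j (u s)) t (ut t)) := by
  classical
  haveI hfin : IsFiniteMeasure (μ.restrict (Set.Ico 0 T)) := by
    constructor
    rw [Measure.restrict_apply_univ, hμ 0 T hT]
    exact ENNReal.ofReal_lt_top
  have hint : Integrable ut (μ.restrict (Set.Ico 0 T)) := hut.integrable hq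
  have hIOn : ∀ s : Set ℝ, s ⊆ Ico 0 T → IntegrableOn ut s μ :=
    fun s hs => MeasureTheory.IntegrableOn.mono_set (hint : IntegrableOn ut (Ico 0 T) μ) hs
  constructor
  · intro ut₂ hut₂ hrep₂
    have hint₂ : Integrable ut₂ (μ.restrict (Set.Ico 0 T)) := hut₂.integrable hq
    set w : ℝ → StrongDual ℝ V := fun x => ut x - ut₂ x with hwdef
    have hwint : Integrable w (μ.restrict (Set.Ico 0 T)) := hint.sub hint₂
    have hIOn₂ : ∀ s : Set ℝ, s ⊆ Ico 0 T → IntegrableOn ut₂ s μ :=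
      fun s hs => MeasureTheory.IntegrableOn.mono_set (hint₂ : IntegrableOn ut₂ (Ico 0 T) μ) hs
    have hwOn : ∀ s : Set ℝ, s ⊆ Ico 0 T → IntegrableOn w s μ :=
      fun s hs => MeasureTheory.IntegrableOn.mono_set (hwint : IntegrableOn w (Ico 0 T) μ) hs
    have hzero : ∀ c ∈ Icc (0:ℝ) T, ∫ x in Ico 0 c, w x ∂μ = 0 := by
      intro c hc
      have hsub : Ico 0 c ⊆ Ico 0 T := Ico_subset_Ico_right hc.2
      have e3 : ∫ x in Ico 0 c, ut x ∂μ = ∫ x in Ico 0 c, ut₂ x ∂μ :=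
        add_left_cancel ((hrep c hc).symm.trans (hrep₂ c hc))
      calc ∫ x in Ico 0 c, w x ∂μ
          = (∫ x in Ico 0 c, ut x ∂μ) - ∫ x in Ico 0 c, ut₂ x ∂μ :=
            integral_sub (hIOn _ hsub) (hIOn₂ _ hsub)
        _ = 0 := by rw [e3, sub_self]
    have hIco0 : ∀ a b : ℝ, 0 ≤ a → b ≤ T → ∫ x in Ico a b, w x ∂μ = 0 := by
      intro a b h0 hbT
      rcases le_or_gt a b with hab | hab
      swap
      · rw [Ico_eq_empty (not_lt.2 hab.le)]; simp
      have haT : a ≤ T := le_trans hab hbT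
      have h1 : Ico 0 a ∪ Ico a b = Ico 0 b := Ico_union_Ico_eq_Ico h0 hab
      have hd : Disjoint (Ico (0:ℝ) a) (Ico a b) := Ico_disjoint_Ico_same
      have e3 : ∫ x in Ico 0 a ∪ Ico a b, w x ∂μ
          = (∫ x in Ico 0 a, w x ∂μ) + ∫ x in Ico a b, w x ∂μ :=
        setIntegral_union hd measurableSet_Ico (hwOn _ (Ico_subset_Ico_right haT))
          (hwOn _ (fun x hx => ⟨le_trans h0 hx.1, lt_of_lt_of_le hx.2 hbT⟩))
      rw [h1, hzero b ⟨le_trans h0 hab, hbT⟩, hzero a ⟨h0, haT⟩] at e3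
      simpa using e3.symm
    have h_pi : IsPiSystem {S : Set ℝ | ∃ l u, l < u ∧ Ico l u = S} := by
      rintro S1 ⟨l1, u1, h1, rfl⟩ S2 ⟨l2, u2, h2, rfl⟩ hne
      rw [Ico_inter_Ico]
      refine ⟨max l1 l2, min u1 u2, ?_, rfl⟩
      rcases hne with ⟨x, hx⟩
      rw [Ico_inter_Ico] at hx
      exact lt_of_le_of_lt hx.1 hx.2
    have hall : ∀ s : Set ℝ, MeasurableSet s → ∫ x in s, w x ∂(μ.restrict (Set.Ico 0 T)) = 0 := by
      have htot : ∫ x, w x ∂(μ.restrict (Set.Ico 0 T)) = 0 := hIco0 0 T le_rfl le_rfl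
      refine MeasurableSpace.induction_on_inter
        (BorelSpace.measurable_eq.trans (borel_eq_generateFrom_Ico ℝ)) h_pi ?_ ?_ ?_ ?_
      · simp
      · rintro t ⟨l, u, hlu, rfl⟩
        rw [Measure.restrict_restrict measurableSet_Ico, Ico_inter_Ico]
        exact hIco0 (max l 0) (min u T) (le_max_right _ _) (min_le_right _ _)
      · intro s hs hzs
        have := integral_add_compl hs hwint
        rw [hzs, zero_add, htot] at this
        exact this
      · intro f hdisj hmeas hC
        rw [integral_iUnion hmeas hdisj hwint.integrableOn]
        simp [hC]
    have hw0 : w =ᵐ[μ.restrict (Set.Ico 0 T)] 0 :=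
      ae_eq_zero_of_forall_setIntegral_eq_of_sigmaFinite
        (fun s _ _ => hwint.integrableOn) (fun s hs _ => hall s hs)
    filter_upwards [hw0] with x hx
    exact sub_eq_zero.1 hx
  · -- differentiation part
    have hdiff : ∀ t s : ℝ, t ∈ Icc 0 T → s ∈ Icc 0 T → t ≤ s →
        gelfandEmb j (u s) - gelfandEmb j (u t) = ∫ x in Ico t s, ut x ∂μ := by
      intro t s ht hs hts
      have hsplit : Ico 0 t ∪ Ico t s = Ico 0 s := Ico_union_Ico_eq_Ico ht.1 hts
      have e3 : ∫ x in Ico 0 t ∪ Ico t s, ut x ∂μ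
          = (∫ x in Ico 0 t, ut x ∂μ) + ∫ x in Ico t s, ut x ∂μ :=
        setIntegral_union Ico_disjoint_Ico_same measurableSet_Ico
          (hIOn _ (Ico_subset_Ico_right ht.2))
          (hIOn _ (fun x hx => ⟨le_trans ht.1 hx.1, lt_of_lt_of_le hx.2 hs.2⟩))
      rw [hsplit] at e3
      rw [hrep s hs, hrep t ht, e3]
      abel
    set κ : Measure ℝ := (μ.restrict (Set.Ico 0 T)).withDensity
      (fun x => ENNReal.ofReal ‖ut x‖) with hκ
    have hκfin : κ univ ≠ ⊤ := by
      rw [hκ, withDensity_apply _ MeasurableSet.univ, Measure.restrict_univ]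
      have h2 := hint.2
      rw [HasFiniteIntegral] at h2
      simp only [ofReal_norm]
      exact h2.ne
    have hκcont : ∀ t : ℝ, ∀ ε > (0:ℝ), ∃ δ > (0:ℝ), (κ (Ioo t (t + δ))).toReal < ε := by
      intro t ε hε
      have hemp : ⋂ n : ℕ, Ioo t (t + 1/(n+1)) = ∅ := by
        ext x
        simp only [mem_iInter, mem_Ioo, mem_empty_iff_false, iff_false, not_forall]
        by_cases hx : t < x
        · obtain ⟨n, hn⟩ := exists_nat_one_div_lt (sub_pos.2 hx)
          exact ⟨n, fun h => absurd h.2 (by push_neg; linarith)⟩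
        · exact ⟨0, fun h => hx h.1⟩
      have htd := tendsto_measure_iInter_atTop (μ := κ) (s := fun n : ℕ => Ioo t (t + 1/(n+1)))
        (fun n => measurableSet_Ioo.nullMeasurableSet)
        (fun n m hnm => Ioo_subset_Ioo_right (by
          have h1 : 1/((m:ℝ)+1) ≤ 1/((n:ℝ)+1) := by
            apply one_div_le_one_div_of_le (by positivity)
            exact_mod_cast add_le_add_left (Nat.cast_le.2 hnm) 1
          linarith))
        ⟨0, ne_top_of_le_ne_top hκfin (measure_mono (subset_univ _))⟩
      rw [hemp, measure_empty] at htd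
      obtain ⟨n, hn⟩ := (htd.eventually_lt_const (show (0:ℝ≥0∞) < ENNReal.ofReal ε from
        ENNReal.ofReal_pos.2 hε)).exists
      refine ⟨1/(n+1), by positivity, ?_⟩
      calc (κ (Ioo t (t + 1/(n+1)))).toReal
          < (ENNReal.ofReal ε).toReal := ENNReal.toReal_strict_mono ENNReal.ofReal_ne_top hn
        _ = ε := ENNReal.toReal_ofReal hε.le
    have hbound : ∀ A : Set ℝ, MeasurableSet A → A ⊆ Ico 0 T →
        ‖∫ x in A, ut x ∂μ‖ ≤ (κ A).toReal := by
      intro A hA hsub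
      have h1 : ∫ x in A, ut x ∂μ = ∫ x in A, ut x ∂(μ.restrict (Set.Ico 0 T)) := by
        rw [Measure.restrict_restrict hA, inter_eq_self_of_subset_left hsub]
      rw [h1, hκ, withDensity_apply _ hA]
      exact norm_integral_le_lintegral_norm _
    have hκne : ∀ A : Set ℝ, κ A ≠ ⊤ :=
      fun A => ne_top_of_le_ne_top hκfin (measure_mono (subset_univ _))
    -- atoms
    have hatom : ∀ t ∈ Ico (0:ℝ) T, g t < Function.rightLim g t →
        HasDerivG g (Icc 0 T) (fun s => gelfandEmb j (u s)) t (ut t) := by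
      intro t ht hjump
      have ht0 : (0:ℝ) ≤ t := ht.1
      have htT : t < T := ht.2
      set c := Function.rightLim g t - g t with hcdef
      have hc0 : 0 < c := sub_pos.2 hjump
      have hμt : μ {t} = ENNReal.ofReal c := aux_singleton hg hμ t
      rw [HasDerivG, if_pos hjump]
      refine ⟨gelfandEmb j (u t) + c • ut t, ?_, ?_⟩
      swap
      · rw [← hcdef, add_sub_cancel_left, smul_smul, inv_mul_cancel₀ hc0.ne', one_smul]
      rw [Metric.tendsto_nhdsWithin_nhds]
      intro ε hε
      obtain ⟨δ, hδ0, hδ⟩ := hκcont t ε hε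
      refine ⟨δ, hδ0, ?_⟩
      intro s hs hdist
      obtain ⟨hsIcc, hsIoi⟩ := hs
      have hts : t < s := hsIoi
      have hFdiff := hdiff t s ⟨ht0, htT.le⟩ hsIcc hts.le
      have hsplit : Ico t s = {t} ∪ Ioo t s := by
        ext x
        simp only [mem_Ico, mem_union, mem_singleton_iff, mem_Ioo]
        constructor
        · rintro ⟨h1, h2⟩
          rcases eq_or_lt_of_le h1 with h | h
          · exact Or.inl h.symm
          · exact Or.inr ⟨h, h2⟩
        · rintro (rfl | ⟨h1, h2⟩)
          · exact ⟨le_rfl, hts⟩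
          · exact ⟨h1.le, h2⟩
      have hIoosub : Ioo t s ⊆ Ico 0 T :=
        fun x hx => ⟨le_trans ht0 hx.1.le, lt_of_lt_of_le hx.2 hsIcc.2⟩
      have hsing : ∫ x in {t}, ut x ∂μ = c • ut t := by
        rw [Measure.restrict_singleton, integral_smul_measure, integral_dirac, hμt,
          ENNReal.toReal_ofReal hc0.le]
      have hdisj : Disjoint ({t} : Set ℝ) (Ioo t s) :=
        Set.disjoint_singleton_left.2 (fun hmem => lt_irrefl t hmem.1)
      have hunion : ∫ x in Ico t s, ut x ∂μ = c • ut t + ∫ x in Ioo t s, ut x ∂μ := by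
        rw [hsplit, setIntegral_union hdisj measurableSet_Ioo
          (hIOn _ (singleton_subset_iff.2 ht)) (hIOn _ hIoosub), hsing]
      rw [dist_eq_norm]
      have hcalc : (fun s => gelfandEmb j (u s)) s - (gelfandEmb j (u t) + c • ut t)
          = ∫ x in Ioo t s, ut x ∂μ := by
        have h1 : (fun s => gelfandEmb j (u s)) s - (gelfandEmb j (u t) + c • ut t)
            = (gelfandEmb j (u s) - gelfandEmb j (u t)) - c • ut t := by
          simp only []; abel
        rw [h1, hFdiff, hunion, add_sub_cancel_left]
      rw [hcalc]
      have hssub : Ioo t s ⊆ Ioo t (t + δ) := by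
        apply Ioo_subset_Ioo_right
        rw [Real.dist_eq] at hdist
        have := abs_lt.1 hdist
        linarith [this.1]
      calc ‖∫ x in Ioo t s, ut x ∂μ‖ ≤ (κ (Ioo t s)).toReal :=
            hbound _ measurableSet_Ioo hIoosub
        _ ≤ (κ (Ioo t (t + δ))).toReal :=
            ENNReal.toReal_mono (hκne _) (measure_mono hssub)
        _ < ε := hδ
    -- continuity points
    have hφmeas : Measurable (phi g T) := phi_measurable hT
    have hmap := map_phi_eq hg hlc hμ hT
    set J := Ico (g 0) (g T) with hJdef
    have hcomp_int : Integrable (fun y => ut (phi g T y)) (volume.restrict J) := by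
      have h1 : Integrable ut (Measure.map (phi g T) (volume.restrict J)) := by
        rw [hmap]; exact hint
      exact (integrable_map_measure (by rw [hmap]; exact hint.1) hφmeas.aemeasurable).1 h1
    set h : ℝ → StrongDual ℝ V := J.indicator (fun y => ut (phi g T y)) with hhdef
    have hh_int : Integrable h volume := (integrable_indicator_iff (s := J) (f := fun y => ut (phi g T y)) (μ := volume)
      measurableSet_Ico).2 hcomp_int
    have hLP : ∀ᵐ y₀ ∂(volume : Measure ℝ),
        Tendsto (fun b => ⨍ z in Icc y₀ b, ‖h z - h y₀‖ ∂volume) (𝓝[>] y₀) (𝓝 0) ∧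
        Tendsto (fun b => ⨍ z in Icc b y₀, ‖h z - h y₀‖ ∂volume) (𝓝[<] y₀) (𝓝 0) := by
      filter_upwards [(IsUnifLocDoublingMeasure.vitaliFamily (volume : Measure ℝ)
        1).ae_tendsto_average_norm_sub hh_int.locallyIntegrable] with y₀ hy₀
      exact ⟨hy₀.comp (Real.tendsto_Icc_vitaliFamily_right y₀),
        hy₀.comp (Real.tendsto_Icc_vitaliFamily_left y₀)⟩
    obtain ⟨N, hNsup, hNmeas, hNnull⟩ := exists_measurable_superset_of_null (ae_iff.1 hLP)
    set D := {t : ℝ | g t < Function.rightLim g t} with hDdef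
    have hDmeas : MeasurableSet D := by
      have hDsub : D ⊆ {t | ¬ ContinuousAt g t} := by
        intro t htD hcont
        have h1 : Function.rightLim g t = g t :=
          rightLim_eq_of_tendsto
            (hcont.tendsto.mono_left nhdsWithin_le_nhds)
        rw [hDdef, mem_setOf_eq, h1] at htD
        exact lt_irrefl _ htD
      exact (hg.countable_not_continuousAt.mono hDsub).measurableSet
    set Bad2 : Set ℝ := ⋃ r : ℚ, ({x | (r:ℝ) < x ∧ μ (Icc (r:ℝ) x) = 0}
      ∪ {x | x < (r:ℝ) ∧ μ (Ico x (r:ℝ)) = 0}) with hBad2def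
    have hBad2 : μ Bad2 = 0 := measure_iUnion_null fun r =>
      measure_union_null (aux_null_left μ r) (aux_null_right μ r)
    set Bad3 : Set ℝ := Ico 0 T ∩ (Dᶜ ∩ g ⁻¹' N) with hBad3def
    have hBad3meas : MeasurableSet Bad3 :=
      measurableSet_Ico.inter (hDmeas.compl.inter (hg.measurable hNmeas))
    have hBad3sub : Bad3 ⊆ Ico 0 T := fun x hx => hx.1
    have hBad3 : μ Bad3 = 0 := by
      have hν3 : (μ.restrict (Set.Ico 0 T)) Bad3 = 0 := by
        rw [← hmap, Measure.map_apply hφmeas hBad3meas,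
          Measure.restrict_apply (hφmeas hBad3meas)]
        refine measure_mono_null ?_ hNnull
        rintro y ⟨hy1, hy2⟩
        obtain ⟨hpIco, hpD, hpN⟩ := hy1
        have hyg0 : g 0 ≤ y := hy2.1
        have hgle : g (phi g T y) ≤ y := g_phi_le hg hlc hT hyg0
        have hyle : y ≤ Function.rightLim g (phi g T y) := by
          refine ge_of_tendsto (hg.tendsto_rightLim (phi g T y)) ?_
          filter_upwards [self_mem_nhdsWithin] with s hsmem
          rcases le_or_gt s T with hsT | hsT
          · have hs0 : (0:ℝ) ≤ s := le_trans (phi_mem hT y).1 (le_of_lt hsmem)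
            by_contra hys
            push_neg at hys
            have hc := (le_phi_iff hg hlc hT ⟨hs0, hsT⟩ hyg0).2 hys.le
            exact absurd hc (not_le.2 hsmem)
          · exact le_trans hy2.2.le (hg hsT.le)
        have hrl2 : Function.rightLim g (phi g T y) ≤ g (phi g T y) := not_lt.1 hpD
        have hyeq : y = g (phi g T y) := le_antisymm (le_trans hyle hrl2) hgle
        exact hyeq ▸ hpN
      rwa [Measure.restrict_apply hBad3meas, inter_eq_self_of_subset_left hBad3sub] at hν3
    have hgood : ∀ t, t ∈ Ico (0:ℝ) T → t ∉ D → t ∉ Bad2 → t ∉ Bad3 →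
        HasDerivG g (Icc 0 T) (fun s => gelfandEmb j (u s)) t (ut t) := by
      intro t htI htD htB2 htB3
      have ht0 : (0:ℝ) ≤ t := htI.1
      have htT : t < T := htI.2
      have htIcc : t ∈ Icc (0:ℝ) T := ⟨ht0, htT.le⟩
      have hrl : Function.rightLim g t = g t :=
        le_antisymm (not_lt.1 htD) (hg.le_rightLim le_rfl)
      have hcont : ContinuousAt g t := aux_contAt hg hlc htD
      have hμt : μ {t} = 0 := by
        rw [aux_singleton hg hμ t, hrl, sub_self, ENNReal.ofReal_zero]
      have hposR : ∀ s, t < s → s ≤ T → g t < g s := by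
        intro s hts hsT
        rcases lt_or_ge (g t) (g s) with hlt | hle
        · exact hlt
        exfalso
        obtain ⟨r, hr1, hr2⟩ := exists_rat_btwn hts
        refine htB2 (mem_iUnion.2 ⟨r, Or.inr ⟨hr1, ?_⟩⟩)
        rw [hμ t r hr1.le, ENNReal.ofReal_eq_zero]
        have h2 : g (r:ℝ) ≤ g s := hg hr2.le
        linarith
      have hposL : ∀ s, 0 ≤ s → s < t → g s < g t := by
        intro s hs0 hst
        rcases lt_or_ge (g s) (g t) with hlt | hle
        · exact hlt
        exfalso
        obtain ⟨r, hr1, hr2⟩ := exists_rat_btwn hst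
        refine htB2 (mem_iUnion.2 ⟨r, Or.inl ⟨hr2, ?_⟩⟩)
        have hsplit : Icc (r:ℝ) t = Ico (r:ℝ) t ∪ {t} := (Ico_union_right hr2.le).symm
        have h1 : μ (Ico (r:ℝ) t) = 0 := by
          rw [hμ r t hr2.le, ENNReal.ofReal_eq_zero]
          have h2 : g s ≤ g (r:ℝ) := hg hr1.le
          linarith
        refine le_zero_iff.1 ?_
        calc μ (Icc (r:ℝ) t) ≤ μ (Ico (r:ℝ) t) + μ {t} := hsplit ▸ measure_union_le _ _
          _ = 0 := by rw [h1, hμt, add_zero]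
      have hgtJ : g t ∈ J := ⟨hg ht0, hposR T htT le_rfl⟩
      have hphig : phi g T (g t) = t := by
        refine le_antisymm ?_ ((le_phi_iff hg hlc hT htIcc (hg ht0)).2 le_rfl)
        by_contra hlt
        push_neg at hlt
        have hple : phi g T (g t) ≤ T := (phi_mem hT (g t)).2
        have h2 := hposR _ hlt hple
        exact absurd (g_phi_le hg hlc hT (hg ht0)) (not_le.2 h2)
      have hhgt : h (g t) = ut t := by
        rw [hhdef, indicator_of_mem hgtJ, hphig]
      have hgtN : g t ∉ N := by
        intro hmem
        exact htB3 ⟨htI, htD, hmem⟩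
      have hLPt : Tendsto (fun b => ⨍ z in Icc (g t) b, ‖h z - h (g t)‖ ∂volume)
            (𝓝[>] (g t)) (𝓝 0) ∧
          Tendsto (fun b => ⨍ z in Icc b (g t), ‖h z - h (g t)‖ ∂volume)
            (𝓝[<] (g t)) (𝓝 0) := by
        by_contra hcon
        exact hgtN (hNsup hcon)
      rw [HasDerivG, if_neg (show ¬ g t < Function.rightLim g t from htD)]
      rw [Metric.tendsto_nhdsWithin_nhds]
      intro ε hε
      obtain ⟨u1, hu1, hu1sub⟩ := mem_nhdsGT_iff_exists_Ioc_subset.1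
        (hLPt.1.eventually (gt_mem_nhds hε))
      obtain ⟨l1, hl1, hl1sub⟩ := mem_nhdsLT_iff_exists_Ico_subset.1
        (hLPt.2.eventually (gt_mem_nhds hε))
      set η := min (u1 - g t) (g t - l1) with hηdef
      have hη0 : 0 < η := lt_min (sub_pos.2 hu1) (sub_pos.2 hl1)
      obtain ⟨δ, hδ0, hδ⟩ := Metric.continuousAt_iff.1 hcont η hη0
      refine ⟨δ, hδ0, ?_⟩
      intro s hs hdist
      obtain ⟨hsIcc, hsne⟩ := hs
      have hsnet : s ≠ t := fun hh => hsne (by rw [hh]; exact mem_singleton t)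
      have hgdist : |g s - g t| < η := by
        have h2 := hδ hdist
        rwa [Real.dist_eq] at h2
      rw [dist_eq_norm]
      rcases lt_or_gt_of_ne hsnet with hst | hst
      · have hgs : g s < g t := hposL s hsIcc.1 hst
        have hFr : gelfandEmb j (u t) - gelfandEmb j (u s)
            = ∫ z in Ico (g s) (g t), h z ∂volume := by
          rw [hdiff s t hsIcc htIcc hst.le,
            setIntegral_phi hg hlc hμ hT ut hint.1 hsIcc htIcc]
          refine setIntegral_congr_fun measurableSet_Ico (fun z hz => ?_)
          rw [hhdef]
          have hzJ : z ∈ J := ⟨le_trans (hg hsIcc.1) hz.1, lt_of_lt_of_le hz.2 (hg htIcc.2)⟩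
          exact (Set.indicator_of_mem hzJ (fun y => ut (phi g T y))).symm
        have hquot : (g s - g t)⁻¹ • (gelfandEmb j (u s) - gelfandEmb j (u t))
            = (g t - g s)⁻¹ • ∫ z in Ico (g s) (g t), h z ∂volume := by
          rw [← hFr, show g s - g t = -(g t - g s) by ring, ← neg_sub (gelfandEmb j (u t)),
            inv_neg]
          exact neg_smul_neg _ _
        show ‖(g s - g t)⁻¹ • (gelfandEmb j (u s) - gelfandEmb j (u t)) - ut t‖ < ε
        rw [hquot, ← hhgt]
        calc ‖(g t - g s)⁻¹ • (∫ z in Ico (g s) (g t), h z ∂volume) - h (g t)‖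
            ≤ ⨍ z in Icc (g s) (g t), ‖h z - h (g t)‖ ∂volume := key_est h hh_int hgs _
          _ < ε := by
            refine hl1sub ⟨?_, hgs⟩
            have hη2 : η ≤ g t - l1 := min_le_right _ _
            have := abs_lt.1 hgdist
            linarith [this.1]
      · have hgs : g t < g s := hposR s hst hsIcc.2
        have hFr : gelfandEmb j (u s) - gelfandEmb j (u t)
            = ∫ z in Ico (g t) (g s), h z ∂volume := by
          rw [hdiff t s htIcc hsIcc hst.le,
            setIntegral_phi hg hlc hμ hT ut hint.1 htIcc hsIcc]
          refine setIntegral_congr_fun measurableSet_Ico (fun z hz => ?_)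
          rw [hhdef]
          have hzJ : z ∈ J := ⟨le_trans (hg htIcc.1) hz.1, lt_of_lt_of_le hz.2 (hg hsIcc.2)⟩
          exact (Set.indicator_of_mem hzJ (fun y => ut (phi g T y))).symm
        show ‖(g s - g t)⁻¹ • (gelfandEmb j (u s) - gelfandEmb j (u t)) - ut t‖ < ε
        rw [hFr, ← hhgt]
        calc ‖(g s - g t)⁻¹ • (∫ z in Ico (g t) (g s), h z ∂volume) - h (g t)‖
            ≤ ⨍ z in Icc (g t) (g s), ‖h z - h (g t)‖ ∂volume := key_est h hh_int hgs _
          _ < ε := by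
            refine hu1sub ⟨hgs, ?_⟩
            have hη1 : η ≤ u1 - g t := min_le_left _ _
            have := abs_lt.1 hgdist
            linarith [this.2]
    rw [ae_iff]
    have hsub2 : {t | ¬ HasDerivG g (Icc 0 T) (fun s => gelfandEmb j (u s)) t (ut t)}
        ⊆ ((Ico (0:ℝ) T ∩
          {t | ¬ HasDerivG g (Icc 0 T) (fun s => gelfandEmb j (u s)) t (ut t)})
          ∪ (Ico (0:ℝ) T)ᶜ) := by
      intro t ht
      by_cases hmem : t ∈ Ico (0:ℝ) T
      · exact Or.inl ⟨hmem, ht⟩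
      · exact Or.inr hmem
    refine measure_mono_null hsub2 (measure_union_null ?_ ?_)
    · have hkey : Ico (0:ℝ) T ∩
          {t | ¬ HasDerivG g (Icc 0 T) (fun s => gelfandEmb j (u s)) t (ut t)}
          ⊆ Bad2 ∪ Bad3 := by
        rintro t ⟨htI, htn⟩
        by_cases hD : t ∈ D
        · exact absurd (hatom t htI hD) htn
        by_cases h2 : t ∈ Bad2
        · exact Or.inl h2
        by_cases h3 : t ∈ Bad3
        · exact Or.inr h3
        exact absurd (hgood t htI hD h2 h3) htn
      exact (Measure.absolutelyContinuous_of_le Measure.restrict_le_self)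
        (measure_mono_null hkey (measure_union_null hBad2 hBad3))
    · rw [Measure.restrict_apply measurableSet_Ico.compl]
      simp
end

section
/- Let g be nondecreasing and left-continuous and let u, v ∈ L^q_g([0,T], V') for some Banach space V'. If ∫_{[0,t)} u dμ_g = ∫_{[0,t)} v dμ_g in V' for every t ∈ [0,T], then u(t) = v(t) for μ_g-a.e. t ∈ [0,T]. -/
open MeasureTheory Filter Set ENNReal

/-- A real-valued integrable function whose integral over every `Iio t` vanishes is a.e. zero,
for a finite measure on `ℝ`. -/
theorem stmt16_real_aux (ν : Measure ℝ) [IsFiniteMeasure ν] (h : ℝ → ℝ)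
    (hh : Integrable h ν) (hz : ∀ t : ℝ, ∫ x in Set.Iio t, h x ∂ν = 0) :
    h =ᵐ[ν] 0 := by
  set ν1 : Measure ℝ := ν.withDensity (fun x => ENNReal.ofReal (h x)) with hν1
  set ν2 : Measure ℝ := ν.withDensity (fun x => ENNReal.ofReal (-h x)) with hν2
  haveI : IsFiniteMeasure ν1 := isFiniteMeasure_withDensity_ofReal hh.2
  haveI : IsFiniteMeasure ν2 := isFiniteMeasure_withDensity_ofReal hh.neg.2
  have key : ∀ s : Set ℝ, MeasurableSet s →
      ∫ x in s, h x ∂ν = (ν1 s).toReal - (ν2 s).toReal := by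
    intro s hs
    rw [integral_eq_lintegral_pos_part_sub_lintegral_neg_part hh.restrict,
      hν1, hν2, withDensity_apply _ hs, withDensity_apply _ hs]
  have eq_on_Iio : ∀ t : ℝ, ν1 (Set.Iio t) = ν2 (Set.Iio t) := by
    intro t
    have h0 := hz t
    rw [key _ measurableSet_Iio, sub_eq_zero] at h0
    exact (ENNReal.toReal_eq_toReal_iff' (measure_ne_top _ _) (measure_ne_top _ _)).mp h0
  have hext : ν1 = ν2 := by
    refine MeasureTheory.Measure.ext_of_generateFrom_of_iUnion (Set.range Set.Iio)
      (fun n : ℕ => Set.Iio (n : ℝ)) ?_ isPiSystem_Iio ?_ (fun n => ⟨n, rfl⟩)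
      (fun n => measure_ne_top _ _) ?_
    · exact BorelSpace.measurable_eq.trans (borel_eq_generateFrom_Iio ℝ)
    · refine Set.eq_univ_of_forall fun x => Set.mem_iUnion.2 ?_
      obtain ⟨n, hn⟩ := exists_nat_gt x
      exact ⟨n, hn⟩
    · rintro _ ⟨t, rfl⟩
      exact eq_on_Iio t
  refine ae_eq_zero_of_forall_setIntegral_eq_of_sigmaFinite
    (fun s hs _ => hh.integrableOn) (fun s hs _ => ?_)
  rw [key s hs, hext, sub_self]

/-- If two `Lᑫ_g` functions with values in a Banach space have the same indefinite
`μ_g`-integral on `[0,t)` for every `t ∈ [0,T]`, they agree `μ_g`-a.e. on `[0,T]`. -/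
theorem stmt16
    {E : Type*} [NormedAddCommGroup E] [NormedSpace ℝ E] [CompleteSpace E]
    (g : ℝ → ℝ) (hg : Monotone g)
    (hlc : ∀ t : ℝ, ContinuousWithinAt g (Set.Iio t) t)
    (μ : Measure ℝ)
    (hμ : ∀ a b : ℝ, a ≤ b → μ (Set.Ico a b) = ENNReal.ofReal (g b - g a))
    (T : ℝ) (hT : 0 ≤ T)
    (q : ℝ≥0∞) (hq : 1 ≤ q)
    (u v : ℝ → E)
    (hu : MemLp u q (μ.restrict (Set.Ico 0 T)))
    (hv : MemLp v q (μ.restrict (Set.Ico 0 T)))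
    (heq : ∀ t ∈ Set.Icc 0 T,
      ∫ s in Set.Ico 0 t, u s ∂μ = ∫ s in Set.Ico 0 t, v s ∂μ) :
    u =ᵐ[μ.restrict (Set.Ico 0 T)] v := by
  set ν : Measure ℝ := μ.restrict (Set.Ico 0 T) with hν
  haveI : IsFiniteMeasure ν := by
    constructor
    rw [hν, Measure.restrict_apply_univ, hμ 0 T hT]
    exact ENNReal.ofReal_lt_top
  have hui : Integrable u ν := hu.integrable hq
  have hvi : Integrable v ν := hv.integrable hq
  have hf : Integrable (u - v) ν := hui.sub hvi
  -- the integral of `u - v` over every `Iio t` vanishes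
  have hz : ∀ t : ℝ, ∫ x in Set.Iio t, (u - v) x ∂ν = 0 := by
    intro t
    set t' : ℝ := max 0 (min t T) with ht'
    have ht'mem : t' ∈ Set.Icc 0 T := ⟨le_max_left _ _, max_le hT (min_le_right _ _)⟩
    have hset : Set.Iio t ∩ Set.Ico 0 T = Set.Ico 0 t' := by
      ext x
      simp only [Set.mem_inter_iff, Set.mem_Iio, Set.mem_Ico, ht', lt_max_iff, lt_min_iff]
      constructor
      · rintro ⟨h1, h2, h3⟩
        exact ⟨h2, Or.inr ⟨h1, h3⟩⟩
      · rintro ⟨h2, h3 | ⟨h4, h5⟩⟩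
        · exact absurd h3 (not_lt.mpr h2)
        · exact ⟨h4, h2, h5⟩
    have hrr : ν.restrict (Set.Iio t) = μ.restrict (Set.Ico 0 t') := by
      rw [hν, Measure.restrict_restrict measurableSet_Iio, hset]
    have hsub : Set.Ico (0 : ℝ) t' ∩ Set.Ico 0 T = Set.Ico 0 t' :=
      Set.inter_eq_self_of_subset_left (Set.Ico_subset_Ico_right ht'mem.2)
    have hrr' : μ.restrict (Set.Ico 0 t') = ν.restrict (Set.Ico 0 t') := by
      rw [hν, Measure.restrict_restrict measurableSet_Ico, hsub]
    have hui' : IntegrableOn u (Set.Ico 0 t') μ := by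
      rw [IntegrableOn, hrr']
      exact hui.restrict
    have hvi' : IntegrableOn v (Set.Ico 0 t') μ := by
      rw [IntegrableOn, hrr']
      exact hvi.restrict
    calc ∫ x in Set.Iio t, (u - v) x ∂ν
        = ∫ x in Set.Ico 0 t', (u - v) x ∂μ := by rw [hrr]
      _ = (∫ x in Set.Ico 0 t', u x ∂μ) - ∫ x in Set.Ico 0 t', v x ∂μ := by
          simp only [Pi.sub_apply]
          exact integral_sub hui' hvi'
      _ = 0 := by rw [heq t' ht'mem, sub_self]
  -- pass to continuous linear functionals
  have hdual : ∀ c : E →L[ℝ] ℝ, (fun x => c ((u - v) x)) =ᵐ[ν] 0 := by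
    intro c
    refine stmt16_real_aux ν _ (c.integrable_comp hf) fun t => ?_
    rw [ContinuousLinearMap.integral_comp_comm c hf.restrict, hz t, map_zero]
  obtain ⟨s, s_sep, hmem⟩ := hf.aestronglyMeasurable.isSeparable_ae_range
  have hzero : (u - v) =ᵐ[ν] 0 :=
    ae_eq_zero_of_forall_dual_of_isSeparable ℝ s_sep hdual hmem
  filter_upwards [hzero] with x hx
  have : u x - v x = 0 := hx
  exact sub_eq_zero.mp this
end
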